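/- arXiv:2311.04762 — 8 statements merged into one kernel-verified Lean document; each statement's English description precedes it below -/
import Mathlib

section
/- Let Λ = (λ_n)_{n≥1} be a strictly increasing sequence of positive reals tending to infinity, with counting function F_Λ(t) = #{k : λ_k ≤ t}. Then the set of limit points of the sequence (k/λ_k)_{k≥1} coincides with the set of limit points of the sequence (F_Λ(n)/n)_{n≥1}. -/
open Filter

lemma cross_lemma (u : ℕ → ℝ) (c d : ℝ) (hcd : c ≤ d) (p q : ℕ) (hpq : p ≤ q)
    (h0 : u p < c) (h1 : d ≤ u q)
    (hstep : ∀ k, p ≤ k → u k < c → u (k + 1) < d) :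
    ∃ r, p < r ∧ r ≤ q ∧ c ≤ u r ∧ u r < d := by
  classical
  have hex : ∃ r, p ≤ r ∧ c ≤ u r := ⟨q, hpq, le_trans hcd h1⟩
  obtain ⟨hpr, hcr⟩ := Nat.find_spec hex
  have hrq : Nat.find hex ≤ q := Nat.find_min' hex ⟨hpq, le_trans hcd h1⟩
  have hner : Nat.find hex ≠ p := fun h => by rw [h] at hcr; linarith
  have hpr' : p < Nat.find hex := lt_of_le_of_ne hpr (Ne.symm hner)
  have hs : Nat.find hex - 1 + 1 = Nat.find hex := by omega
  have hps : p ≤ Nat.find hex - 1 := by omega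
  have hns : ¬ (p ≤ Nat.find hex - 1 ∧ c ≤ u (Nat.find hex - 1)) :=
    Nat.find_min hex (by omega)
  have hus : u (Nat.find hex - 1) < c := by
    by_contra h
    exact hns ⟨hps, le_of_not_gt h⟩
  have := hstep _ hps hus
  rw [hs] at this
  exact ⟨Nat.find hex, hpr', hrq, hcr, this⟩

lemma key_iff (u : ℕ → ℝ) (x : ℝ) :
    MapClusterPt x atTop u ↔ ∀ ε > (0:ℝ), ∀ N : ℕ, ∃ n, N ≤ n ∧ |u n - x| < ε := by
  rw [mapClusterPt_iff_frequently]
  constructor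
  · intro h ε hε N
    obtain ⟨n, hn, hmem⟩ := frequently_atTop.mp (h (Metric.ball x ε) (Metric.ball_mem_nhds x hε)) N
    exact ⟨n, hn, by simpa [Real.dist_eq] using hmem⟩
  · intro h s hs
    obtain ⟨ε, hε, hball⟩ := Metric.mem_nhds_iff.mp hs
    refine frequently_atTop.mpr fun N => ?_
    obtain ⟨n, hn, hlt⟩ := h ε hε N
    exact ⟨n, hn, hball (by simpa [Real.dist_eq] using hlt)⟩

lemma count_ge (lam : ℕ → ℝ) (F : ℝ → ℕ) (hmono : StrictMono lam)
    (htends : Tendsto lam atTop atTop)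
    (hF : ∀ t : ℝ, F t = Nat.card {k : ℕ | lam k ≤ t})
    (k : ℕ) (t : ℝ) (h : lam k ≤ t) : k + 1 ≤ F t := by
  rw [hF]
  have hfin : {i : ℕ | lam i ≤ t}.Finite := by
    obtain ⟨M, hM⟩ := eventually_atTop.mp (tendsto_atTop.mp htends (t + 1))
    refine (Set.finite_Iio M).subset fun i hi => ?_
    simp only [Set.mem_setOf_eq] at hi
    by_contra hc
    have hMi : M ≤ i := le_of_not_gt (fun h' => hc (Set.mem_Iio.mpr h'))
    linarith [hM i hMi]
  calc k + 1 = Nat.card (Set.Iic k) := by simp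
    _ ≤ Nat.card {i : ℕ | lam i ≤ t} :=
        Nat.card_mono hfin fun i hi => le_trans (hmono.monotone (Set.mem_Iic.mp hi)) h

lemma count_le (lam : ℕ → ℝ) (F : ℝ → ℕ) (hmono : StrictMono lam)
    (hF : ∀ t : ℝ, F t = Nat.card {k : ℕ | lam k ≤ t})
    (m : ℕ) (t : ℝ) (h : t < lam m) : F t ≤ m := by
  rw [hF]
  calc Nat.card {i : ℕ | lam i ≤ t} ≤ Nat.card (Set.Iio m) := by
        refine Nat.card_mono (Set.finite_Iio m) fun i hi => ?_
        simp only [Set.mem_setOf_eq] at hi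
        by_contra hc
        exact absurd (le_trans (hmono.monotone (le_of_not_gt (fun h' => hc (Set.mem_Iio.mpr h')))) hi) (not_le.mpr h)
    _ = m := by simp

set_option maxHeartbeats 2000000 in
/-- The set of limit points of `(k/λ_k)` coincides with the set of limit points of
`(F_Λ(n)/n)`, where `F_Λ` is the counting function of the strictly increasing
sequence `Λ` of positive reals tending to infinity. (`lam k` denotes `λ_{k+1}`.) -/
theorem limit_points_counting_eq (lam : ℕ → ℝ) (F : ℝ → ℕ)
    (hmono : StrictMono lam) (hpos : ∀ k, 0 < lam k)
    (htends : Tendsto lam atTop atTop)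
    (hF : ∀ t : ℝ, F t = Nat.card {k : ℕ | lam k ≤ t}) :
    {x : ℝ | MapClusterPt x atTop (fun k : ℕ => ((k : ℝ) + 1) / lam k)} =
    {x : ℝ | MapClusterPt x atTop (fun n : ℕ => (F ((n : ℝ) + 1) : ℝ) / ((n : ℝ) + 1))} := by
  have F_ge := count_ge lam F hmono htends hF
  have F_le := count_le lam F hmono hF
  have F_lt : ∀ t : ℝ, t < lam (F t) := by
    intro t
    by_contra h
    have := F_ge (F t) t (le_of_not_gt h)
    omega
  have F_low : ∀ t : ℝ, 1 ≤ F t → lam (F t - 1) ≤ t := by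
    intro t ht
    by_contra h
    have := F_le (F t - 1) t (lt_of_not_ge h)
    omega
  have F_mono : ∀ s t : ℝ, s ≤ t → F s ≤ F t := by
    intro s t hst
    rcases Nat.eq_zero_or_pos (F s) with h | h
    · omega
    · have h1 := F_low s h
      have := F_ge (F s - 1) t (le_trans h1 hst)
      omega
  have hlam_big : ∀ C : ℝ, ∃ K : ℕ, ∀ k, K ≤ k → C ≤ lam k := by
    intro C
    obtain ⟨K, hK⟩ := eventually_atTop.mp (tendsto_atTop.mp htends C)
    exact ⟨K, hK⟩
  ext x
  simp only [Set.mem_setOf_eq, key_iff]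
  constructor
  · -- from a to b
    intro H ε hε N
    have hx : 0 ≤ x := by
      by_contra hxneg
      push_neg at hxneg
      obtain ⟨n, _, hn⟩ := H (-x) (by linarith) 0
      have h1 : 0 < ((n : ℝ) + 1) / lam n := div_pos (by positivity) (hpos n)
      rw [abs_lt] at hn
      linarith [hn.2]
    rcases eq_or_lt_of_le hx with hx0 | hx0
    · -- x = 0
      obtain ⟨K, hK⟩ := hlam_big (max ((N:ℝ) + 2) 2)
      obtain ⟨k, hkK, hk⟩ := H (ε/2) (by linarith) K
      have ht2 : 2 ≤ lam k := le_trans (le_max_right _ _) (hK k hkK)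
      have htN : (N:ℝ) + 2 ≤ lam k := le_trans (le_max_left _ _) (hK k hkK)
      have htpos : 0 < lam k := hpos k
      set P := ⌊lam k⌋₊ with hPdef
      have hP1 : (P:ℝ) ≤ lam k := Nat.floor_le htpos.le
      have hP2 : lam k - 1 < (P:ℝ) := by linarith [Nat.lt_floor_add_one (lam k)]
      have hPN : N + 1 ≤ P := by
        have h2 : ((N + 1 : ℕ) : ℝ) < (P : ℝ) := by push_cast; linarith
        exact (Nat.cast_lt.mp h2).le
      have hFP : F (P : ℝ) ≤ k + 1 :=
        F_le (k + 1) (P:ℝ) (lt_of_le_of_lt hP1 (hmono (Nat.lt_succ_self k)))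
      refine ⟨P - 1, by omega, ?_⟩
      have h1P : 1 ≤ P := by omega
      have hcast : ((P - 1 : ℕ) : ℝ) + 1 = (P : ℝ) := by
        rw [Nat.cast_sub h1P]; push_cast; ring
      rw [hcast, ← hx0, sub_zero,
        abs_of_nonneg (div_nonneg (Nat.cast_nonneg _) (by positivity))]
      have hak : ((k:ℝ)+1)/lam k < ε/2 := by
        rw [← hx0, sub_zero,
          abs_of_nonneg (div_pos (by positivity) htpos).le] at hk
        exact hk
      have hk1 : (k:ℝ) + 1 < ε/2 * lam k := (div_lt_iff₀ htpos).mp hak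
      have hFP' : (F (P:ℝ) : ℝ) ≤ (k:ℝ) + 1 := by exact_mod_cast hFP
      have hPpos : (0:ℝ) < (P:ℝ) := by linarith
      rw [div_lt_iff₀ hPpos]
      nlinarith [hFP', hk1, hP2, ht2, hε]
    · -- x > 0
      set ε' := min (ε/2) (x/2) with hε'def
      have hε'pos : 0 < ε' := lt_min (by linarith) (by linarith)
      have hε'ε : ε' ≤ ε/2 := min_le_left _ _
      have hε'x : 2*ε' ≤ x := by
        have h := min_le_right (ε/2) (x/2)
        rw [← hε'def] at h
        linarith
      obtain ⟨K, hK⟩ := hlam_big ((N:ℝ) + 3 + 8*x/ε')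
      obtain ⟨k, hkK, hk⟩ := H (ε'/4) (by linarith) K
      have ht : (N:ℝ) + 3 + 8*x/ε' ≤ lam k := hK k hkK
      have htpos : 0 < lam k := hpos k
      have hxdiv : 16 ≤ 8*x/ε' := (le_div_iff₀ hε'pos).mpr (by linarith)
      have hNnn : (0:ℝ) ≤ (N:ℝ) := Nat.cast_nonneg N
      have hε'lam : 8*x ≤ ε' * lam k := by
        have h1 : 8*x/ε' ≤ lam k := by linarith
        have h2 := (div_le_iff₀ hε'pos).mp h1
        linarith
      rw [abs_lt] at hk
      have hub : (k:ℝ)+1 < (x + ε'/4) * lam k := by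
        have h' : ((k:ℝ)+1)/lam k < x + ε'/4 := by linarith [hk.2]
        exact (div_lt_iff₀ htpos).mp h'
      have hlb : (x - ε'/4) * lam k < (k:ℝ)+1 := by
        have h' : x - ε'/4 < ((k:ℝ)+1)/lam k := by linarith [hk.1]
        exact (lt_div_iff₀ htpos).mp h'
      obtain ⟨Q, hQdef⟩ : ∃ Q, ⌈lam k⌉₊ = Q := ⟨_, rfl⟩
      have hQ1 : lam k ≤ (Q:ℝ) := hQdef ▸ Nat.le_ceil _
      have hQ2 : (Q:ℝ) < lam k + 1 := hQdef ▸ Nat.ceil_lt_add_one htpos.le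
      have hQN : N + 2 ≤ Q := by
        have h' : ((N+2:ℕ):ℝ) ≤ (Q:ℝ) := by push_cast; linarith
        exact_mod_cast h'
      have h1Q : 1 ≤ Q := by omega
      have hcastQ : ((Q-1:ℕ):ℝ) + 1 = (Q:ℝ) := by
        rw [Nat.cast_sub h1Q]; push_cast; ring
      have hQpos : (0:ℝ) < (Q:ℝ) := by linarith
      have hFQ : k + 1 ≤ F (Q:ℝ) := F_ge k (Q:ℝ) hQ1
      have hFQ' : (k:ℝ) + 1 ≤ (F ((Q:ℝ)):ℝ) := by exact_mod_cast hFQ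
      have hxe2 : (0:ℝ) ≤ x - ε'/2 := by linarith
      have hbQ_lb : x - ε'/2 ≤ (F ((Q:ℝ)):ℝ)/(Q:ℝ) := by
        rw [le_div_iff₀ hQpos]
        have h1 : (x - ε'/2) * (Q:ℝ) ≤ (x - ε'/2) * (lam k + 1) :=
          mul_le_mul_of_nonneg_left hQ2.le hxe2
        linarith [hlb, hFQ', h1, hε'lam, hε'x]
      by_cases hcase : (F ((Q:ℝ)):ℝ)/(Q:ℝ) ≤ x + ε'
      · refine ⟨Q-1, by omega, ?_⟩
        rw [hcastQ, abs_lt]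
        constructor <;> linarith
      · push_neg at hcase
        obtain ⟨K₂, hK₂⟩ := hlam_big ((Q:ℝ) + 2)
        obtain ⟨k', hk'K, hk'⟩ := H (ε'/4) (by linarith) (max K K₂)
        have ht' : (N:ℝ) + 3 + 8*x/ε' ≤ lam k' := hK k' (le_trans (le_max_left _ _) hk'K)
        have ht'Q : (Q:ℝ) + 2 ≤ lam k' := hK₂ k' (le_trans (le_max_right _ _) hk'K)
        have ht'pos : 0 < lam k' := hpos k'
        rw [abs_lt] at hk'
        have hub' : (k':ℝ)+1 < (x + ε'/4) * lam k' := by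
          have h' : ((k':ℝ)+1)/lam k' < x + ε'/4 := by linarith [hk'.2]
          exact (div_lt_iff₀ ht'pos).mp h'
        obtain ⟨P, hPdef⟩ : ∃ P, ⌊lam k'⌋₊ = P := ⟨_, rfl⟩
        have hP1 : (P:ℝ) ≤ lam k' := hPdef ▸ Nat.floor_le ht'pos.le
        have hP2 : lam k' - 1 < (P:ℝ) := by
          have := hPdef ▸ Nat.lt_floor_add_one (lam k')
          linarith
        have hQP : Q + 1 ≤ P := by
          have h' : ((Q+1:ℕ):ℝ) < (P:ℝ) := by push_cast; linarith
          exact (Nat.cast_lt.mp h').le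
        have h1P : 1 ≤ P := by omega
        have hcastP : ((P-1:ℕ):ℝ) + 1 = (P:ℝ) := by
          rw [Nat.cast_sub h1P]; push_cast; ring
        have hPpos : (0:ℝ) < (P:ℝ) := by linarith
        have hFP : F (P:ℝ) ≤ k' + 1 :=
          F_le (k'+1) (P:ℝ) (lt_of_le_of_lt hP1 (hmono (Nat.lt_succ_self k')))
        have hFP' : (F ((P:ℝ)):ℝ) ≤ (k':ℝ)+1 := by exact_mod_cast hFP
        have hε'lam' : 8*x ≤ ε' * lam k' := by
          have h1 : 8*x/ε' ≤ lam k' := by linarith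
          have h2 := (div_le_iff₀ hε'pos).mp h1
          linarith
        have hxe2' : (0:ℝ) ≤ x + ε'/2 := by linarith
        have hbP_ub : (F ((P:ℝ)):ℝ)/(P:ℝ) ≤ x + ε'/2 := by
          rw [div_le_iff₀ hPpos]
          have h1 : (x + ε'/2) * (lam k' - 1) ≤ (x + ε'/2) * (P:ℝ) :=
            mul_le_mul_of_nonneg_left hP2.le hxe2'
          linarith [hub', hFP', h1, hε'lam', hε'x]
        have hstepb : ∀ j : ℕ, Q-1 ≤ j →
            -((F ((j:ℝ)+1):ℝ)/((j:ℝ)+1)) < -(x+ε') →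
            -((F (((j+1:ℕ):ℝ)+1):ℝ)/(((j+1:ℕ):ℝ)+1)) < -(x+ε'/2) := by
          intro j hj hneg
          have hjpos : (0:ℝ) < (j:ℝ)+1 := by positivity
          have hj2 : (x+ε') * ((j:ℝ)+1) < (F ((j:ℝ)+1):ℝ) := by
            have h' : x+ε' < (F ((j:ℝ)+1):ℝ)/((j:ℝ)+1) := by linarith
            exact (lt_div_iff₀ hjpos).mp h'
          have hcastj : ((j+1:ℕ):ℝ)+1 = (j:ℝ)+2 := by push_cast; ring
          rw [hcastj]
          have hmonoF : F ((j:ℝ)+1) ≤ F ((j:ℝ)+2) := F_mono _ _ (by linarith)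
          have hmonoF' : (F ((j:ℝ)+1):ℝ) ≤ (F ((j:ℝ)+2):ℝ) := by exact_mod_cast hmonoF
          have hjQ : (Q:ℝ) - 1 ≤ (j:ℝ) := by
            have h' : ((Q-1:ℕ):ℝ) ≤ (j:ℝ) := Nat.cast_le.mpr hj
            rw [Nat.cast_sub h1Q] at h'
            push_cast at h'
            linarith
          have hmid : x + ε'/2 < (F ((j:ℝ)+1):ℝ)/((j:ℝ)+2) := by
            rw [lt_div_iff₀ (by positivity : (0:ℝ) < (j:ℝ)+2)]
            have hjbig : 8*x/ε' ≤ (j:ℝ) := by linarith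
            have h8 : 8*x ≤ ε' * (j:ℝ) := by
              have h2 := (div_le_iff₀ hε'pos).mp hjbig
              linarith
            linarith [hj2, h8, hε'x]
          have hfinal : (F ((j:ℝ)+1):ℝ)/((j:ℝ)+2) ≤ (F ((j:ℝ)+2):ℝ)/((j:ℝ)+2) :=
            by gcongr
          linarith
        have hQ1P : Q - 1 ≤ P - 1 := by omega
        have hbQ' : -((F (((Q-1:ℕ):ℝ)+1):ℝ)/(((Q-1:ℕ):ℝ)+1)) < -(x+ε') := by
          rw [hcastQ]; linarith
        have hbP' : -(x+ε'/2) ≤ -((F (((P-1:ℕ):ℝ)+1):ℝ)/(((P-1:ℕ):ℝ)+1)) := by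
          rw [hcastP]; linarith
        obtain ⟨r, hr1, hr2, hr3, hr4⟩ :=
          cross_lemma (fun n : ℕ => -((F ((n:ℝ)+1):ℝ)/((n:ℝ)+1))) (-(x+ε')) (-(x+ε'/2))
            (by linarith) (Q-1) (P-1) hQ1P hbQ' hbP' hstepb
        refine ⟨r, by omega, ?_⟩
        rw [abs_lt]
        constructor <;> linarith
  · -- from b to a
    intro H ε hε N
    have hbnn : ∀ n : ℕ, (0:ℝ) ≤ (F ((n : ℝ) + 1) : ℝ) / ((n : ℝ) + 1) := by
      intro n; exact div_nonneg (Nat.cast_nonneg _) (by positivity)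
    have hx : 0 ≤ x := by
      by_contra hxneg
      push_neg at hxneg
      obtain ⟨n, _, hn⟩ := H (-x) (by linarith) 0
      rw [abs_lt] at hn
      linarith [hn.2, hbnn n]
    rcases eq_or_lt_of_le hx with hx0 | hx0
    · -- x = 0
      obtain ⟨n, hn1, hn2⟩ := H (ε/2) (by linarith) ⌈lam N⌉₊
      have hnlam : lam N ≤ (n:ℝ) + 1 := by
        calc lam N ≤ (⌈lam N⌉₊:ℝ) := Nat.le_ceil _
          _ ≤ (n:ℝ) := Nat.cast_le.mpr hn1
          _ ≤ (n:ℝ)+1 := by linarith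
      obtain ⟨m, hm⟩ : ∃ m, F ((n:ℝ)+1) = m := ⟨_, rfl⟩
      have hmN : N + 1 ≤ m := hm ▸ F_ge N ((n:ℝ)+1) hnlam
      have hlamm : (n:ℝ)+1 < lam m := hm ▸ F_lt _
      rw [hm] at hn2
      refine ⟨m, by omega, ?_⟩
      have hnpos : (0:ℝ) < (n:ℝ)+1 := by positivity
      have hbn : (m:ℝ)/((n:ℝ)+1) < ε/2 := by
        rw [← hx0, sub_zero,
          abs_of_nonneg (div_nonneg (Nat.cast_nonneg _) hnpos.le)] at hn2
        exact hn2
      have hm1 : (1:ℝ) ≤ (m:ℝ) := by exact_mod_cast (by omega : 1 ≤ m)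
      rw [← hx0, sub_zero, abs_of_nonneg (div_pos (by positivity) (hpos m)).le]
      have h2 : ((m:ℝ)+1)/lam m < ((m:ℝ)+1)/((n:ℝ)+1) :=
        div_lt_div_of_pos_left (by positivity) hnpos hlamm
      have h3 : (m:ℝ) < ε/2 * ((n:ℝ)+1) := (div_lt_iff₀ hnpos).mp hbn
      have h4 : ((m:ℝ)+1)/((n:ℝ)+1) < ε := by
        rw [div_lt_iff₀ hnpos]
        nlinarith [hm1, h3, hε, hnpos]
      linarith
    · -- x > 0
      set ε' := min (ε/2) (x/2) with hε'def
      have hε'pos : 0 < ε' := lt_min (by linarith) (by linarith)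
      have hε'ε : ε' ≤ ε/2 := min_le_left _ _
      have hε'x : 2*ε' ≤ x := by
        have h := min_le_right (ε/2) (x/2)
        rw [← hε'def] at h
        linarith
      obtain ⟨n, hn1, hn2⟩ := H (ε'/4) (by linarith) ⌈max (lam N) (4/ε')⌉₊
      have hnC : max (lam N) (4/ε') ≤ (n:ℝ) + 1 := by
        have h := (Nat.cast_le (α := ℝ)).mpr hn1
        have h2 := Nat.le_ceil (max (lam N) (4/ε'))
        linarith
      have hnlam : lam N ≤ (n:ℝ)+1 := le_trans (le_max_left _ _) hnC
      have hn4 : 4/ε' ≤ (n:ℝ)+1 := le_trans (le_max_right _ _) hnC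
      have hn4' : 4 ≤ ε' * ((n:ℝ)+1) := by
        have := (div_le_iff₀ hε'pos).mp hn4
        linarith
      have hnpos : (0:ℝ) < (n:ℝ)+1 := by positivity
      obtain ⟨m, hmdef⟩ : ∃ m, F ((n:ℝ)+1) = m := ⟨_, rfl⟩
      have hmN : N + 1 ≤ m := hmdef ▸ F_ge N _ hnlam
      have h1m : 1 ≤ m := by omega
      have hlt : (n:ℝ)+1 < lam m := hmdef ▸ F_lt _
      rw [hmdef] at hn2
      rw [abs_lt] at hn2
      have hmlb : (x - ε'/4) * ((n:ℝ)+1) < (m:ℝ) := by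
        have h' : x - ε'/4 < (m:ℝ)/((n:ℝ)+1) := by linarith [hn2.1]
        exact (lt_div_iff₀ hnpos).mp h'
      have hmub : (m:ℝ) < (x + ε'/4) * ((n:ℝ)+1) := by
        have h' : (m:ℝ)/((n:ℝ)+1) < x + ε'/4 := by linarith [hn2.2]
        exact (div_lt_iff₀ hnpos).mp h'
      have ham_ub : ((m:ℝ)+1)/lam m < x + ε'/2 := by
        have h2 : ((m:ℝ)+1)/lam m < ((m:ℝ)+1)/((n:ℝ)+1) :=
          div_lt_div_of_pos_left (by positivity) hnpos hlt
        have h3 : ((m:ℝ)+1)/((n:ℝ)+1) < x + ε'/2 := by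
          rw [div_lt_iff₀ hnpos]
          nlinarith [hmub, hn4', hε'pos]
        linarith
      by_cases hcase : x - ε' ≤ ((m:ℝ)+1)/lam m
      · refine ⟨m, by omega, ?_⟩
        rw [abs_lt]
        constructor <;> linarith
      · push_neg at hcase
        obtain ⟨n', hn'1, hn'2⟩ := H (ε'/4) (by linarith)
          (max ⌈max (lam N) (4/ε')⌉₊ ⌈lam (m+1)⌉₊)
        have hn'lam : lam (m+1) ≤ (n':ℝ)+1 := by
          have h := (Nat.cast_le (α := ℝ)).mpr (le_trans (le_max_right _ _) hn'1)
          have h2 := Nat.le_ceil (lam (m+1))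
          linarith
        have hn'pos : (0:ℝ) < (n':ℝ)+1 := by positivity
        obtain ⟨m', hm'def⟩ : ∃ m', F ((n':ℝ)+1) = m' := ⟨_, rfl⟩
        have hm'2 : m + 2 ≤ m' := hm'def ▸ F_ge (m+1) _ hn'lam
        have h1m' : 1 ≤ m' := by omega
        have hlow' : lam (m'-1) ≤ (n':ℝ)+1 := by
          have := F_low ((n':ℝ)+1) (by omega : 1 ≤ F ((n':ℝ)+1))
          rwa [hm'def] at this
        rw [hm'def] at hn'2
        rw [abs_lt] at hn'2
        have hcast' : ((m'-1:ℕ):ℝ) + 1 = (m':ℝ) := by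
          rw [Nat.cast_sub h1m']; push_cast; ring
        have ham' : x - ε'/2 ≤ (((m'-1:ℕ):ℝ) + 1)/lam (m'-1) := by
          rw [hcast']
          have h5 : (m':ℝ)/((n':ℝ)+1) ≤ (m':ℝ)/lam (m'-1) :=
            div_le_div_of_nonneg_left (Nat.cast_nonneg _) (hpos _) hlow'
          have h6 : x - ε'/2 ≤ (m':ℝ)/((n':ℝ)+1) := by linarith [hn'2.1]
          linarith
        have hstep : ∀ j : ℕ, m ≤ j → ((j:ℝ)+1)/lam j < x - ε' →
            (((j+1:ℕ):ℝ)+1)/lam (j+1) < x - ε'/2 := by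
          intro j hjm hj
          have hcastj : ((j+1:ℕ):ℝ) + 1 = (j:ℝ) + 2 := by push_cast; ring
          rw [hcastj]
          have hlamj : (n:ℝ)+1 < lam j := lt_of_lt_of_le hlt (hmono.monotone hjm)
          have h7 : ((j:ℝ)+2)/lam (j+1) < ((j:ℝ)+2)/lam j :=
            div_lt_div_of_pos_left (by positivity) (hpos j) (hmono (Nat.lt_succ_self j))
          have h8 : ((j:ℝ)+1) < (x - ε') * lam j := (div_lt_iff₀ (hpos j)).mp hj
          have h9 : ((j:ℝ)+2)/lam j < x - ε'/2 := by
            rw [div_lt_iff₀ (hpos j)]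
            nlinarith [h8, hn4', hlamj, hε'pos,
              mul_lt_mul_of_pos_left hlamj hε'pos]
          linarith
        obtain ⟨r, hr1, hr2, hr3, hr4⟩ :=
          cross_lemma (fun k : ℕ => ((k:ℝ)+1)/lam k) (x-ε') (x-ε'/2) (by linarith)
            m (m'-1) (by omega) hcase ham' hstep
        refine ⟨r, by omega, ?_⟩
        rw [abs_lt]
        constructor <;> linarith
end

section
/- Let p ≥ 1 be an integer, a_0, …, a_{p−1} nonnegative reals, and (λ_n)_{n≥1} a sequence of reals such that lim_{k→∞} (λ_{kp+j+1} − λ_{kp+j}) = a_j for each j = 0, 1, …, p−1. Then lim_{n→∞} λ_n/n = (a_0 + a_1 + ⋯ + a_{p−1})/p. -/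
open Filter

/-- If for each residue class `j` mod `p` the consecutive differences
`λ_{kp+j+1} - λ_{kp+j}` converge to `a j ≥ 0`, then `λ_n / n → (∑ a_j)/p`. -/
theorem tendsto_div_of_periodic_differences (p : ℕ) (hp : 1 ≤ p)
    (a : ℕ → ℝ) (ha : ∀ j < p, 0 ≤ a j) (lam : ℕ → ℝ)
    (h : ∀ j < p, Tendsto (fun k : ℕ => lam (k * p + j + 1) - lam (k * p + j))
      atTop (nhds (a j))) :
    Tendsto (fun n : ℕ => lam n / n) atTop
      (nhds ((∑ j ∈ Finset.range p, a j) / p)) := by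
  set S := ∑ j ∈ Finset.range p, a j with hS
  have hp0 : (0:ℝ) < p := by exact_mod_cast hp
  -- full-period differences
  have hc : Tendsto (fun k : ℕ => lam ((k+1)*p) - lam (k*p)) atTop (nhds S) := by
    have heq : ∀ k : ℕ, lam ((k+1)*p) - lam (k*p)
        = ∑ j ∈ Finset.range p, (lam (k*p+j+1) - lam (k*p+j)) := by
      intro k
      have e : ∀ j : ℕ, lam (k*p+j+1) = lam (k*p+(j+1)) := fun j => by rw [add_assoc]
      simp only [e]
      rw [Finset.sum_range_sub (fun j => lam (k*p+j))]
      rw [add_mul, one_mul, add_zero]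
    simp only [heq]
    exact tendsto_finset_sum _ (fun j hj => h j (Finset.mem_range.mp hj))
  -- Cesàro
  have hces : Tendsto (fun k : ℕ => lam (k*p) / k) atTop (nhds S) := by
    have h1 := hc.cesaro
    have h2 : Tendsto (fun k : ℕ => lam 0 / k) atTop (nhds 0) := by
      simpa using tendsto_const_nhds.div_atTop (tendsto_natCast_atTop_atTop (R := ℝ))
    have h3 := h1.add h2
    rw [add_zero] at h3
    refine h3.congr (fun k => ?_)
    rw [Finset.sum_range_sub (fun i => lam (i*p))]
    simp only [Nat.zero_mul]
    ring
  -- partial differences within a period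
  have hpart : ∀ j < p, Tendsto (fun k : ℕ => lam (k*p+j) - lam (k*p)) atTop
      (nhds (∑ i ∈ Finset.range j, a i)) := by
    intro j hj
    have heq : ∀ k : ℕ, lam (k*p+j) - lam (k*p)
        = ∑ i ∈ Finset.range j, (lam (k*p+i+1) - lam (k*p+i)) := by
      intro k
      have e : ∀ i : ℕ, lam (k*p+i+1) = lam (k*p+(i+1)) := fun i => by rw [add_assoc]
      simp only [e]
      rw [Finset.sum_range_sub (fun i => lam (k*p+i))]
      simp
    simp only [heq]
    exact tendsto_finset_sum _ (fun i hi => h i (lt_of_lt_of_le (Finset.mem_range.mp hi) hj.le))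
  -- each residue class
  have key : ∀ j < p, Tendsto (fun k : ℕ => lam (k*p+j) / ((k*p+j : ℕ) : ℝ)) atTop
      (nhds (S / p)) := by
    intro j hj
    have htop : Tendsto (fun k : ℕ => ((k*p+j : ℕ) : ℝ)) atTop atTop := by
      apply tendsto_natCast_atTop_atTop.comp
      apply tendsto_atTop_mono (fun k => ?_) tendsto_id
      calc (k : ℕ) = k * 1 := (mul_one k).symm
        _ ≤ k * p + j := le_add_right (Nat.mul_le_mul_left k hp)
    have hinv : Tendsto (fun k : ℕ => ((k*p+j : ℕ) : ℝ)⁻¹) atTop (nhds 0) :=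
      tendsto_inv_atTop_zero.comp htop
    have t1 : Tendsto (fun k : ℕ => (k : ℝ) / ((k*p+j : ℕ) : ℝ)) atTop (nhds (1/p)) := by
      have hden : Tendsto (fun k : ℕ => (p : ℝ) + j * (k : ℝ)⁻¹) atTop (nhds p) := by
        have h4 := (tendsto_const_nhds (x := (j:ℝ))).mul tendsto_inv_atTop_nhds_zero_nat
        simpa using (tendsto_const_nhds (x := (p:ℝ))).add h4
      have h5 := hden.inv₀ (ne_of_gt hp0)
      rw [one_div]
      refine h5.congr' ?_
      filter_upwards [eventually_ge_atTop 1] with k hk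
      have hk0 : (0:ℝ) < k := by exact_mod_cast hk
      push_cast
      rw [eq_div_iff (by positivity)]
      field_simp
    have hlim := (hces.mul t1).add ((hpart j hj).mul hinv)
    rw [mul_zero, add_zero, mul_one_div] at hlim
    refine hlim.congr' ?_
    filter_upwards [eventually_ge_atTop 1] with k hk
    have hk0 : (0:ℝ) < k := by exact_mod_cast hk
    have hd0 : (0:ℝ) < ((k*p+j : ℕ) : ℝ) := by
      have : 1 ≤ k*p+j := le_add_right (Nat.one_le_iff_ne_zero.mpr (by positivity))
      exact_mod_cast Nat.lt_of_lt_of_le Nat.zero_lt_one this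
    field_simp
    ring
  -- combine residue classes
  rw [Metric.tendsto_atTop]
  intro ε hε
  have hchoice : ∀ j : ℕ, ∃ N : ℕ, ∀ k ≥ N, j < p →
      dist (lam (k*p+j) / ((k*p+j : ℕ) : ℝ)) (S / p) < ε := by
    intro j
    by_cases hj : j < p
    · obtain ⟨N, hN⟩ := (Metric.tendsto_atTop.mp (key j hj)) ε hε
      exact ⟨N, fun k hk _ => hN k hk⟩
    · exact ⟨0, fun k _ hj' => absurd hj' hj⟩
  choose N hN using hchoice
  refine ⟨((Finset.range p).sup N + 1) * p, fun n hn => ?_⟩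
  have hj : n % p < p := Nat.mod_lt n hp
  have hk : (Finset.range p).sup N + 1 ≤ n / p := by
    exact Nat.le_div_iff_mul_le (by omega) |>.mpr hn
  have hrep : n = (n / p) * p + n % p := by
    rw [Nat.mul_comm]
    exact (Nat.div_add_mod n p).symm
  have hsup : N (n % p) ≤ (Finset.range p).sup N := Finset.le_sup (Finset.mem_range.mpr hj)
  rw [hrep]
  exact hN (n % p) (n / p) (le_trans (hsup.trans ((Finset.range p).sup N).le_succ) hk) hj
end

section
/- Let Λ = (λ_n)_{n≥1} be a strictly increasing sequence of positive reals with lim_{n→∞} λ_n/n = ℓ > 0 and with limsup_{n→∞} (λ_{n+1} − λ_n) < +∞. Let λ̄ be the piecewise linear interpolant of Λ, and let β > 1. Then for any sequences x_n → +∞ and y_n with y_n > β x_n for all n, one has lim_{n→∞} (λ̄(y_n) − λ̄(x_n))/(y_n − x_n) = ℓ. -/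
open Filter

/-- If `λ_n / n → ℓ > 0`, the consecutive differences have finite limsup, and
`x_n → +∞` with `y_n > β x_n` for a fixed `β > 1`, then
`(λ̄(y_n) - λ̄(x_n))/(y_n - x_n) → ℓ`. -/
theorem interpolant_increment_ratio_tendsto (lam : ℕ → ℝ) (lbar : ℝ → ℝ)
    (ℓ β : ℝ) (hl : 0 < ℓ) (hβ : 1 < β)
    (hmono : StrictMono lam) (hpos : ∀ n, 0 < lam n)
    (hlim : Tendsto (fun n : ℕ => lam n / n) atTop (nhds ℓ))
    (hdiff : limsup (fun n : ℕ => ((lam (n + 1) - lam n : ℝ) : EReal)) atTop < ⊤)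
    (hbar : ∀ x : ℝ, 0 ≤ x →
      lbar x = (lam (⌊x⌋₊ + 1) - lam ⌊x⌋₊) * (x - ⌊x⌋₊) + lam ⌊x⌋₊)
    (x y : ℕ → ℝ) (hx : Tendsto x atTop atTop) (hx0 : ∀ n, 0 ≤ x n)
    (hxy : ∀ n, β * x n < y n) :
    Tendsto (fun n : ℕ => (lbar (y n) - lbar (x n)) / (y n - x n)) atTop (nhds ℓ) := by
  -- Step 1 : linear growth of lbar
  have key : ∀ ε : ℝ, 0 < ε → ∀ᶠ t : ℝ in atTop, |lbar t - ℓ * t| ≤ ε * t := by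
    intro ε hε
    obtain ⟨M, hM⟩ : ∃ M : ℝ, ∀ᶠ n : ℕ in atTop, lam (n + 1) - lam n ≤ M := by
      obtain ⟨M, hM1, -⟩ := EReal.lt_iff_exists_real_btwn.mp hdiff
      exact ⟨M, (eventually_lt_of_limsup_lt hM1).mono fun n hn =>
        le_of_lt (by exact_mod_cast hn)⟩
    obtain ⟨N₁, hN₁⟩ := eventually_atTop.mp hM
    have hlim2 : ∀ᶠ n : ℕ in atTop, |lam n - ℓ * n| ≤ ε / 2 * n := by
      obtain ⟨N₂, hN₂⟩ := Metric.tendsto_atTop.mp hlim (ε / 2) (by positivity)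
      refine eventually_atTop.mpr ⟨max N₂ 1, fun n hn => ?_⟩
      have hn1 : 1 ≤ n := le_trans (le_max_right _ _) hn
      have hnpos : (0 : ℝ) < n := by exact_mod_cast hn1
      have h := hN₂ n (le_trans (le_max_left _ _) hn)
      rw [Real.dist_eq] at h
      have h' : |lam n / n - ℓ| ≤ ε / 2 := le_of_lt h
      have heq : lam n - ℓ * n = (lam n / n - ℓ) * n := by
        field_simp
      rw [heq, abs_mul, abs_of_pos hnpos]
      exact mul_le_mul_of_nonneg_right h' (le_of_lt hnpos)
    obtain ⟨N₂, hN₂⟩ := eventually_atTop.mp hlim2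
    filter_upwards [eventually_ge_atTop ((N₁ : ℝ)), eventually_ge_atTop ((N₂ : ℝ)),
      eventually_ge_atTop (1 : ℝ), eventually_ge_atTop (2 * (M + ℓ) / ε)]
      with t htN₁ htN₂ ht1 htM
    have ht0 : (0 : ℝ) ≤ t := by linarith
    set k := ⌊t⌋₊ with hk
    have hkN₁ : N₁ ≤ k := Nat.le_floor htN₁
    have hkN₂ : N₂ ≤ k := Nat.le_floor htN₂
    have hkt : (k : ℝ) ≤ t := Nat.floor_le ht0
    have htk : t < k + 1 := Nat.lt_floor_add_one t
    have hd : lam (k + 1) - lam k ≤ M := hN₁ k hkN₁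
    have hd0 : 0 ≤ lam (k + 1) - lam k :=
      le_of_lt (sub_pos.2 (hmono (Nat.lt_succ_self k)))
    have hlamk : |lam k - ℓ * k| ≤ ε / 2 * k := hN₂ k hkN₂
    have hMt : M + ℓ ≤ ε / 2 * t := by
      rw [div_le_iff₀ hε] at htM; linarith
    rw [hbar t ht0]
    have habs : |(lam (k + 1) - lam k) * (t - k) + lam k - ℓ * t|
        ≤ |(lam (k + 1) - lam k) * (t - k)| + |lam k - ℓ * k| + |ℓ * ((k : ℝ) - t)| := by
      have heq : (lam (k + 1) - lam k) * (t - k) + lam k - ℓ * t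
          = (lam (k + 1) - lam k) * (t - k) + (lam k - ℓ * k) + ℓ * ((k : ℝ) - t) := by
        ring
      rw [heq]
      exact abs_add_three _ _ _
    have h1 : |(lam (k + 1) - lam k) * (t - k)| ≤ M := by
      rw [abs_mul, abs_of_nonneg hd0]
      have h2 : |t - (k : ℝ)| ≤ 1 := by
        rw [abs_le]; constructor <;> linarith
      calc (lam (k + 1) - lam k) * |t - (k : ℝ)|
          ≤ (lam (k + 1) - lam k) * 1 := mul_le_mul_of_nonneg_left h2 hd0
        _ = lam (k + 1) - lam k := mul_one _
        _ ≤ M := hd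
    have h3 : |ℓ * ((k : ℝ) - t)| ≤ ℓ := by
      rw [abs_mul, abs_of_pos hl]
      have h2 : |(k : ℝ) - t| ≤ 1 := by
        rw [abs_le]; constructor <;> linarith
      calc ℓ * |(k : ℝ) - t| ≤ ℓ * 1 := mul_le_mul_of_nonneg_left h2 (le_of_lt hl)
        _ = ℓ := mul_one _
    have hkt2 : ε / 2 * k ≤ ε / 2 * t :=
      mul_le_mul_of_nonneg_left hkt (by positivity)
    linarith
  -- Step 2 : the main limit
  have hy : Tendsto y atTop atTop := by
    apply tendsto_atTop_mono (fun n => le_of_lt (hxy n))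
    exact hx.const_mul_atTop (by linarith : (0 : ℝ) < β)
  rw [Metric.tendsto_atTop]
  intro ε hε
  have hβ1 : (0 : ℝ) < β - 1 := by linarith
  have hβ2 : (0 : ℝ) < β + 1 := by linarith
  set ε' := ε * (β - 1) / (2 * (β + 1)) with hε'def
  have hε' : 0 < ε' := div_pos (mul_pos hε hβ1) (by linarith)
  obtain ⟨N, hN⟩ := eventually_atTop.mp
    ((hx.eventually (key ε' hε')).and (hy.eventually (key ε' hε')))
  refine ⟨N, fun n hn => ?_⟩
  obtain ⟨hx1, hy1⟩ := hN n hn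
  have hxn0 := hx0 n
  have hyx : 0 < y n - x n := by nlinarith [hxy n]
  have hne : y n - x n ≠ 0 := ne_of_gt hyx
  rw [Real.dist_eq]
  have heq : (lbar (y n) - lbar (x n)) / (y n - x n) - ℓ
      = ((lbar (y n) - ℓ * y n) - (lbar (x n) - ℓ * x n)) / (y n - x n) := by
    field_simp
    ring
  rw [heq, abs_div, abs_of_pos hyx, div_lt_iff₀ hyx]
  have hnum : |(lbar (y n) - ℓ * y n) - (lbar (x n) - ℓ * x n)|
      ≤ ε' * y n + ε' * x n :=
    (abs_sub _ _).trans (add_le_add hy1 hx1)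
  have hineq : (β - 1) * (x n + y n) ≤ (β + 1) * (y n - x n) := by
    nlinarith [hxy n]
  have hmid : ε' * y n + ε' * x n ≤ ε / 2 * (y n - x n) := by
    have h := mul_le_mul_of_nonneg_left hineq
      (le_of_lt (by positivity : (0 : ℝ) < ε / (2 * (β + 1))))
    calc ε' * y n + ε' * x n = ε / (2 * (β + 1)) * ((β - 1) * (x n + y n)) := by
          rw [hε'def]; field_simp; ring
      _ ≤ ε / (2 * (β + 1)) * ((β + 1) * (y n - x n)) := h
      _ = ε / 2 * (y n - x n) := by field_simp
  nlinarith
end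

section
/- Let 1 ≤ p ≤ 9 and let Λ be the increasing sequence of positive integers with first decimal digit equal to p. Then the upper asymptotic density of Λ equals 10/(9(p+1)). -/
open Filter

private lemma geo_sum (k : ℕ) : 9 * ∑ j ∈ Finset.range k, 10 ^ j + 1 = 10 ^ k := by
  induction k with
  | zero => simp
  | succ n ih =>
    rw [Finset.sum_range_succ, pow_succ]
    omega

/-- Upper bound: 9(p+1)·F(n) ≤ 10n + 10. -/
private lemma fd_upper (p n : ℕ) (hp : 1 ≤ p) (hp9 : p ≤ 9) :
    9 * (p + 1) * ((Finset.Icc 1 n).filter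
      (fun m => m / 10 ^ (Nat.log 10 m) = p)).card ≤ 10 * n + 10 := by
  rcases Nat.eq_zero_or_pos n with rfl | hn
  · simp
  set k := Nat.log 10 n with hk
  have hqn : 10 ^ k ≤ n := Nat.pow_log_le_self 10 (by omega)
  have hn10 : n < 10 ^ (k + 1) := Nat.lt_pow_succ_log_self (by norm_num) n
  -- the filtered set is contained in a union of intervals
  have hsub : (Finset.Icc 1 n).filter (fun m => m / 10 ^ (Nat.log 10 m) = p) ⊆
      (Finset.range (k + 1)).biUnion
        (fun j => Finset.Icc (p * 10 ^ j) (min ((p + 1) * 10 ^ j - 1) n)) := by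
    intro m hm
    simp only [Finset.mem_filter, Finset.mem_Icc] at hm
    obtain ⟨⟨h1, h2⟩, h3⟩ := hm
    set j := Nat.log 10 m with hj
    have hjk : j ≤ k := Nat.log_mono_right h2
    have hpow : (0:ℕ) < 10 ^ j := Nat.pow_pos (by norm_num)
    have hlo : p * 10 ^ j ≤ m := by
      calc p * 10 ^ j = (m / 10 ^ j) * 10 ^ j := by rw [h3]
        _ ≤ m := Nat.div_mul_le_self m _
    have hhi : m < (p + 1) * 10 ^ j := by
      have : m / 10 ^ j < p + 1 := by omega
      exact (Nat.div_lt_iff_lt_mul hpow).mp this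
    simp only [Finset.mem_biUnion, Finset.mem_range, Finset.mem_Icc]
    exact ⟨j, by omega, hlo, le_min (by omega) h2⟩
  have hcard := Finset.card_le_card hsub
  have hcard2 := le_trans hcard (Finset.card_biUnion_le)
  -- per-interval cardinalities
  have hterm : ∀ j, (Finset.Icc (p * 10 ^ j) (min ((p + 1) * 10 ^ j - 1) n)).card
      = min ((p + 1) * 10 ^ j - 1) n + 1 - p * 10 ^ j := by
    intro j; rw [Nat.card_Icc]
  have hterm_le : ∀ j, (Finset.Icc (p * 10 ^ j) (min ((p + 1) * 10 ^ j - 1) n)).card ≤ 10 ^ j := by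
    intro j
    have he : (p + 1) * 10 ^ j = p * 10 ^ j + 10 ^ j := by ring
    have hsub2 : Finset.Icc (p * 10 ^ j) (min ((p + 1) * 10 ^ j - 1) n) ⊆
        Finset.Icc (p * 10 ^ j) (p * 10 ^ j + 10 ^ j - 1) :=
      Finset.Icc_subset_Icc_right (by rw [← he]; exact min_le_left _ _)
    refine le_trans (Finset.card_le_card hsub2) (le_of_eq ?_)
    rw [Nat.card_Icc]
    have h1 : 1 ≤ 10 ^ j := Nat.one_le_pow j 10 (by norm_num)
    omega
  set c := (Finset.Icc (p * 10 ^ k) (min ((p + 1) * 10 ^ k - 1) n)).card with hc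
  have hsum : ∑ j ∈ Finset.range (k + 1),
      (Finset.Icc (p * 10 ^ j) (min ((p + 1) * 10 ^ j - 1) n)).card
      ≤ ∑ j ∈ Finset.range k, 10 ^ j + c := by
    rw [Finset.sum_range_succ]
    exact Nat.add_le_add (Finset.sum_le_sum fun j _ => hterm_le j) le_rfl
  have hF_le : ((Finset.Icc 1 n).filter (fun m => m / 10 ^ (Nat.log 10 m) = p)).card
      ≤ ∑ j ∈ Finset.range k, 10 ^ j + c := le_trans hcard2 hsum
  -- properties of c
  have hc_le : c ≤ 10 ^ k := hterm_le k
  have hc2 : c = 0 ∨ p * 10 ^ k + c ≤ n + 1 := by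
    rw [hc, hterm]
    have he : (p + 1) * 10 ^ k = p * 10 ^ k + 10 ^ k := by ring
    have h1 := min_le_left ((p + 1) * 10 ^ k - 1) n
    have h2 := min_le_right ((p + 1) * 10 ^ k - 1) n
    omega
  have hgeo := geo_sum k
  -- finish by the two cases
  have key : 9 * (p + 1) * (∑ j ∈ Finset.range k, 10 ^ j + c) ≤ 10 * n + 10 := by
    rcases hc2 with h0 | hpc
    · rw [h0]
      have : (p + 1) * (9 * ∑ j ∈ Finset.range k, 10 ^ j) ≤ 10 * (9 * ∑ j ∈ Finset.range k, 10 ^ j) :=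
        Nat.mul_le_mul_right _ (by omega)
      have h10 : 9 * ∑ j ∈ Finset.range k, 10 ^ j ≤ n := by omega
      nlinarith [Nat.mul_le_mul (show p + 1 ≤ 10 by omega) h10]
    · -- integer arithmetic
      have hq1 : (1:ℕ) ≤ 10 ^ k := Nat.one_le_pow _ _ (by norm_num)
      have hpz : (1:ℤ) ≤ (p:ℤ) := by exact_mod_cast hp
      zify at hpc hc_le hqn hgeo ⊢
      nlinarith [mul_nonneg (show (0:ℤ) ≤ 9 * (p:ℤ) - 1 by linarith)
          (show (0:ℤ) ≤ (10:ℤ) ^ k - (c:ℤ) by linarith),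
        mul_le_mul_of_nonneg_left (le_of_eq hgeo) (show (0:ℤ) ≤ (p:ℤ) + 1 by linarith),
        hpc, hqn]
  calc 9 * (p + 1) * ((Finset.Icc 1 n).filter (fun m => m / 10 ^ (Nat.log 10 m) = p)).card
      ≤ 9 * (p + 1) * (∑ j ∈ Finset.range k, 10 ^ j + c) := Nat.mul_le_mul_left _ hF_le
    _ ≤ 10 * n + 10 := key

/-- Lower bound at n = (p+1)·10^k − 1. -/
private lemma fd_lower (p k : ℕ) (hp : 1 ≤ p) (hp9 : p ≤ 9) :
    10 ^ (k + 1) ≤ 9 * ((Finset.Icc 1 ((p + 1) * 10 ^ k - 1)).filter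
      (fun m => m / 10 ^ (Nat.log 10 m) = p)).card + 1 := by
  have hdisj : ∀ i ∈ Finset.range (k + 1), ∀ j ∈ Finset.range (k + 1), i ≠ j →
      Disjoint (Finset.Icc (p * 10 ^ i) ((p + 1) * 10 ^ i - 1))
        (Finset.Icc (p * 10 ^ j) ((p + 1) * 10 ^ j - 1)) := by
    have haux : ∀ i j : ℕ, i < j →
        Disjoint (Finset.Icc (p * 10 ^ i) ((p + 1) * 10 ^ i - 1))
          (Finset.Icc (p * 10 ^ j) ((p + 1) * 10 ^ j - 1)) := by
      intro i j hij
      rw [Finset.disjoint_left]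
      intro m hmi hmj
      simp only [Finset.mem_Icc] at hmi hmj
      have h1 : (p + 1) * 10 ^ i ≤ 10 ^ (i + 1) := by
        have h := Nat.mul_le_mul_right (10 ^ i) (show p + 1 ≤ 10 by omega)
        rw [pow_succ]
        omega
      have h2 : 10 ^ (i + 1) ≤ 10 ^ j := Nat.pow_le_pow_right (by norm_num) hij
      have h3 : 10 ^ j ≤ p * 10 ^ j := Nat.le_mul_of_pos_left (10 ^ j) (show 0 < p by omega)
      have h4 : (0:ℕ) < 10 ^ i := Nat.pow_pos (by norm_num)
      omega
    intro i _ j _ hij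
    rcases hij.lt_or_gt with h | h
    · exact haux i j h
    · exact (haux j i h).symm
  have hsub : (Finset.range (k + 1)).biUnion
      (fun j => Finset.Icc (p * 10 ^ j) ((p + 1) * 10 ^ j - 1)) ⊆
      (Finset.Icc 1 ((p + 1) * 10 ^ k - 1)).filter
        (fun m => m / 10 ^ (Nat.log 10 m) = p) := by
    intro m hm
    simp only [Finset.mem_biUnion, Finset.mem_range, Finset.mem_Icc] at hm
    obtain ⟨j, hj, hlo, hhi⟩ := hm
    have hpow : (0:ℕ) < 10 ^ j := Nat.pow_pos (by norm_num)
    have hm_lt : m < (p + 1) * 10 ^ j := by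
      have : (0:ℕ) < (p + 1) * 10 ^ j := by positivity
      omega
    have h10j : 10 ^ j ≤ m := le_trans (Nat.le_mul_of_pos_left (10 ^ j) (show 0 < p by omega)) hlo
    have h10j1 : m < 10 ^ (j + 1) := by
      have : (p + 1) * 10 ^ j ≤ 10 ^ (j + 1) := by
        have h := Nat.mul_le_mul_right (10 ^ j) (show p + 1 ≤ 10 by omega)
        rw [pow_succ]
        omega
      omega
    have hlog : Nat.log 10 m = j := Nat.log_eq_of_pow_le_of_lt_pow h10j h10j1
    have hdiv : m / 10 ^ j = p := Nat.div_eq_of_lt_le hlo hm_lt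
    simp only [Finset.mem_filter, Finset.mem_Icc]
    refine ⟨⟨by omega, ?_⟩, by rw [hlog]; exact hdiv⟩
    have h2 : 10 ^ j ≤ 10 ^ k := Nat.pow_le_pow_right (by norm_num) (by omega)
    have h3 : (p + 1) * 10 ^ j ≤ (p + 1) * 10 ^ k := Nat.mul_le_mul_left _ h2
    omega
  have hcard : ∑ j ∈ Finset.range (k + 1), 10 ^ j ≤
      ((Finset.Icc 1 ((p + 1) * 10 ^ k - 1)).filter
        (fun m => m / 10 ^ (Nat.log 10 m) = p)).card := by
    have := Finset.card_le_card hsub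
    rw [Finset.card_biUnion hdisj] at this
    refine le_trans (le_of_eq ?_) this
    apply Finset.sum_congr rfl
    intro j _
    rw [Nat.card_Icc]
    have he : (p + 1) * 10 ^ j = p * 10 ^ j + 10 ^ j := by ring
    have h4 : (0:ℕ) < 10 ^ j := Nat.pow_pos (by norm_num)
    omega
  have hgeo := geo_sum (k + 1)
  omega

/-- The upper asymptotic density of the set of positive integers with leading
decimal digit `p` equals `10/(9(p+1))`. -/
theorem first_digit_upper_density (p : ℕ) (hp : 1 ≤ p) (hp9 : p ≤ 9) (F : ℕ → ℕ)
    (hF : ∀ t : ℕ, F t =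
      ((Finset.Icc 1 t).filter (fun m => m / 10 ^ (Nat.log 10 m) = p)).card) :
    limsup (fun n : ℕ => (F n : ℝ) / n) atTop = 10 / (9 * ((p : ℝ) + 1)) := by
  have hp1 : (0:ℝ) < 9 * ((p:ℝ) + 1) := by positivity
  set L : ℝ := 10 / (9 * ((p : ℝ) + 1)) with hL
  -- global bound F n ≤ n
  have hFle : ∀ n, F n ≤ n := by
    intro n
    rw [hF]
    calc ((Finset.Icc 1 n).filter (fun m => m / 10 ^ (Nat.log 10 m) = p)).card
        ≤ (Finset.Icc 1 n).card := Finset.card_filter_le _ _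
      _ = n := by rw [Nat.card_Icc]; omega
  have hbdd : IsBoundedUnder (· ≤ ·) atTop (fun n : ℕ => (F n : ℝ) / n) := by
    apply Filter.isBoundedUnder_of
    refine ⟨1, fun n => ?_⟩
    rcases Nat.eq_zero_or_pos n with rfl | hn
    · simp
    · rw [div_le_one (by exact_mod_cast hn)]
      exact_mod_cast hFle n
  have hcobdd : IsCoboundedUnder (· ≤ ·) atTop (fun n : ℕ => (F n : ℝ) / n) := by
    apply Filter.IsBoundedUnder.isCoboundedUnder_le
    apply Filter.isBoundedUnder_of
    exact ⟨0, fun n => by positivity⟩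
  refine le_antisymm ?_ ?_
  · -- limsup ≤ L
    set v : ℕ → ℝ := fun n => L + (10 / (9 * ((p:ℝ) + 1))) * (1 / n) with hv
    have hvt : Tendsto v atTop (nhds L) := by
      have h0 : Tendsto (fun n : ℕ => (10 / (9 * ((p:ℝ) + 1))) * (1 / n)) atTop (nhds 0) := by
        simpa using tendsto_one_div_atTop_nhds_zero_nat.const_mul (10 / (9 * ((p:ℝ) + 1)))
      have h1 := (tendsto_const_nhds : Tendsto (fun _ : ℕ => L) atTop (nhds L)).add h0
      simpa [hv, one_div] using h1
    have hle : ∀ᶠ n in atTop, (F n : ℝ) / n ≤ v n := by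
      filter_upwards [eventually_gt_atTop 0] with n hn
      have hn' : (0:ℝ) < n := by exact_mod_cast hn
      have key : ((9:ℝ) * ((p:ℝ) + 1)) * (F n : ℝ) ≤ 10 * n + 10 := by
        have := fd_upper p n hp hp9
        rw [← hF] at this
        exact_mod_cast this
      have e : v n = (10 * n + 10) / (9 * ((p:ℝ) + 1) * n) := by
        rw [hv, hL]
        field_simp
      rw [e, div_le_div_iff₀ hn' (by positivity)]
      nlinarith [mul_le_mul_of_nonneg_right key hn'.le]
    calc limsup (fun n : ℕ => (F n : ℝ) / n) atTop
        ≤ limsup v atTop := Filter.limsup_le_limsup hle hcobdd (hvt.isBoundedUnder_le)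
      _ = L := hvt.limsup_eq
  · -- L ≤ limsup
    apply Filter.le_limsup_of_frequently_le ?_ hbdd
    have hs : Tendsto (fun k : ℕ => (p + 1) * 10 ^ k - 1) atTop atTop := by
      apply tendsto_atTop_mono (f := fun k : ℕ => k)
      · intro k
        have h1 : k < 10 ^ k := Nat.lt_pow_self (by norm_num)
        have h2 : 10 ^ k ≤ (p + 1) * 10 ^ k := Nat.le_mul_of_pos_left (10 ^ k) (by omega)
        omega
      · exact tendsto_id
    apply hs.frequently
    apply Filter.Frequently.of_forall
    intro k
    set n := (p + 1) * 10 ^ k - 1 with hn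
    have hq1 : (1:ℕ) ≤ 10 ^ k := Nat.one_le_pow _ _ (by norm_num)
    have hnpos : 0 < n := by
      have : 2 * 10 ^ k ≤ (p + 1) * 10 ^ k := Nat.mul_le_mul_right _ (by omega)
      omega
    -- nat inequality 10 * n ≤ 9 * (p+1) * F n
    have keyN : 10 * n ≤ 9 * (p + 1) * F n := by
      have h := fd_lower p k hp hp9
      rw [← hF] at h
      have h2 : (p + 1) * 10 ^ (k + 1) ≤ (p + 1) * (9 * F n + 1) := Nat.mul_le_mul_left _ h
      have e1 : (p + 1) * 10 ^ (k + 1) = 10 * ((p + 1) * 10 ^ k) := by ring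
      have e2 : (p + 1) * (9 * F n + 1) = 9 * (p + 1) * F n + (p + 1) := by ring
      rw [e1, e2] at h2
      have hBA : (1:ℕ) ≤ (p + 1) * 10 ^ k := by
        calc (1:ℕ) ≤ 10 ^ k := hq1
          _ ≤ (p + 1) * 10 ^ k := Nat.le_mul_of_pos_left (10 ^ k) (by omega)
      omega
    have hn' : (0:ℝ) < (n:ℝ) := by exact_mod_cast hnpos
    rw [hL, div_le_div_iff₀ hp1 hn']
    have : (10:ℝ) * n ≤ 9 * ((p:ℝ) + 1) * (F n : ℝ) := by exact_mod_cast keyN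
    nlinarith
end

section
/- Let ℓ > 0 and λ_n = ℓn + ψ_n, where (ψ_n)_{n≥1} is eventually non-decreasing and λ_n > 0 for all n. Then there exists a sequence of distinct positive integers (n_k)_{k≥1} (namely n_k = k + ⌊ψ_k/ℓ⌋, eventually) such that Σ_{k=1}^∞ |1/λ_k − (1/ℓ)/n_k| < +∞. -/
open Filter

set_option maxHeartbeats 1000000

/-- If `λ_n = ℓ n + ψ_n > 0` with `ψ` eventually non-decreasing, then there exists a
sequence of distinct positive integers `n_k` with `∑ |1/λ_k − (1/ℓ)/n_k| < ∞`.
(Indices are shifted by one: `lam k` denotes `λ_{k+1}`.) -/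
theorem summable_of_eventually_monotone_perturbation (ℓ : ℝ) (hl : 0 < ℓ)
    (lam ψ : ℕ → ℝ)
    (hdef : ∀ n : ℕ, lam n = ℓ * (n + 1) + ψ n)
    (hpos : ∀ n : ℕ, 0 < lam n)
    (hψ : ∃ N : ℕ, ∀ m n : ℕ, N ≤ m → m ≤ n → ψ m ≤ ψ n) :
    ∃ nk : ℕ → ℕ, Function.Injective nk ∧ (∀ k, 0 < nk k) ∧
      Summable (fun k : ℕ => |1 / lam k - (1 / ℓ) / (nk k : ℝ)|) := by
  obtain ⟨N, hN⟩ := hψ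
  set c : ℤ := max 0 (-⌈ψ N / ℓ⌉) with hc
  have hc0 : (0:ℤ) ≤ c := le_max_left _ _
  have hcN : -⌈ψ N / ℓ⌉ ≤ c := le_max_right _ _
  set nk : ℕ → ℕ := fun k => if k < N then k + 1 else ((k : ℤ) + 1 + c + ⌈ψ k / ℓ⌉).toNat
    with hnk
  have hceil : ∀ k, N ≤ k → ⌈ψ N / ℓ⌉ ≤ ⌈ψ k / ℓ⌉ := by
    intro k hk
    exact Int.ceil_le_ceil (div_le_div_of_nonneg_right (hN N k le_rfl hk) hl.le)
  have hnn : ∀ k, N ≤ k → 0 ≤ c + ⌈ψ k / ℓ⌉ := by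
    intro k hk
    have := hceil k hk
    omega
  have hval : ∀ k, N ≤ k → (nk k : ℤ) = (k : ℤ) + 1 + c + ⌈ψ k / ℓ⌉ := by
    intro k hk
    have h1 : ¬ k < N := by omega
    have h2 : (0:ℤ) ≤ (k : ℤ) + 1 + c + ⌈ψ k / ℓ⌉ := by
      have := hnn k hk
      have : (0:ℤ) ≤ (k:ℤ) := Int.ofNat_nonneg k
      omega
    simp only [hnk, h1, if_false]
    exact Int.toNat_of_nonneg h2
  have hge : ∀ k, k + 1 ≤ nk k := by
    intro k
    by_cases hk : k < N
    · simp [hnk, hk]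
    · push_neg at hk
      have h := hval k hk
      have h2 : ((k:ℤ) + 1) ≤ (nk k : ℤ) := by
        rw [h]
        have := hnn k hk
        omega
      exact_mod_cast h2
  have hmono : StrictMono nk := by
    apply strictMono_nat_of_lt_succ
    intro k
    by_cases hk' : k < N
    · have hkv : nk k = k + 1 := by simp [hnk, hk']
      have := hge (k + 1)
      omega
    · push_neg at hk'
      have h1 := hval k hk'
      have h2 := hval (k + 1) (le_trans hk' (Nat.le_succ k))
      have hce : ⌈ψ k / ℓ⌉ ≤ ⌈ψ (k + 1) / ℓ⌉ :=
        Int.ceil_le_ceil (div_le_div_of_nonneg_right (hN k (k + 1) hk' (Nat.le_succ k)) hl.le)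
      have : (nk k : ℤ) < (nk (k + 1) : ℤ) := by
        rw [h1, h2]
        push_cast
        omega
      exact_mod_cast this
  obtain ⟨K₀, hK₀⟩ := exists_nat_ge ((2 * (-ψ N)) / ℓ)
  set K := max N K₀ with hK
  have hlam_lb : ∀ k, K ≤ k → ℓ / 2 * ((k : ℝ) + 1) ≤ lam k := by
    intro k hk
    have hkN : N ≤ k := le_trans (le_max_left _ _) hk
    have h1 : ψ N ≤ ψ k := hN N k le_rfl hkN
    have h2 : (K₀ : ℝ) ≤ (k : ℝ) := by
      exact_mod_cast le_trans (le_max_right _ _) hk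
    rw [hdef k]
    have h3 : 2 * (-ψ N) ≤ (K₀ : ℝ) * ℓ := (div_le_iff₀ hl).mp hK₀
    have h4 : ℓ / 2 * (K₀ : ℝ) ≤ ℓ / 2 * (k : ℝ) :=
      mul_le_mul_of_nonneg_left h2 (by linarith)
    nlinarith
  have herr : ∀ k, K ≤ k → |ℓ * ((nk k : ℝ)) - lam k| ≤ ℓ * ((c : ℝ) + 1) := by
    intro k hk
    have hkN : N ≤ k := le_trans (le_max_left _ _) hk
    have h1 : ((nk k : ℝ)) = (k : ℝ) + 1 + (c : ℝ) + ((⌈ψ k / ℓ⌉ : ℤ) : ℝ) := by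
      have := hval k hkN
      have h' : ((nk k : ℤ) : ℝ) = (((k : ℤ) + 1 + c + ⌈ψ k / ℓ⌉ : ℤ) : ℝ) := by
        exact_mod_cast congrArg (Int.cast : ℤ → ℝ) this
      push_cast at h'
      push_cast
      linarith
    rw [hdef k, h1]
    have hle : ψ k / ℓ ≤ ((⌈ψ k / ℓ⌉ : ℤ) : ℝ) := Int.le_ceil _
    have hlt : ((⌈ψ k / ℓ⌉ : ℤ) : ℝ) < ψ k / ℓ + 1 := Int.ceil_lt_add_one _
    have hcc : (0:ℝ) ≤ (c : ℝ) := by exact_mod_cast hc0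
    have e1 : ℓ * (ψ k / ℓ) = ψ k := by field_simp
    have e2 : ℓ * (ψ k / ℓ) ≤ ℓ * ((⌈ψ k / ℓ⌉ : ℤ) : ℝ) :=
      mul_le_mul_of_nonneg_left hle hl.le
    have e3 : ℓ * ((⌈ψ k / ℓ⌉ : ℤ) : ℝ) ≤ ℓ * (ψ k / ℓ + 1) :=
      mul_le_mul_of_nonneg_left hlt.le hl.le
    rw [abs_le]
    constructor <;> nlinarith
  set D : ℝ := 2 * ((c : ℝ) + 1) / ℓ with hD
  have hcc : (0:ℝ) ≤ (c : ℝ) := by exact_mod_cast hc0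
  have hbound : ∀ k, K ≤ k →
      |1 / lam k - (1 / ℓ) / (nk k : ℝ)| ≤ D * (1 / ((k : ℝ) + 1) ^ 2) := by
    intro k hk
    have ha : 0 < lam k := hpos k
    have hk1 : (0:ℝ) < (k : ℝ) + 1 := by positivity
    have hn : ((k : ℝ) + 1) ≤ (nk k : ℝ) := by exact_mod_cast hge k
    have hn0 : (0:ℝ) < (nk k : ℝ) := lt_of_lt_of_le hk1 hn
    have key : 1 / lam k - (1 / ℓ) / (nk k : ℝ)
        = (ℓ * (nk k : ℝ) - lam k) / (ℓ * lam k * (nk k : ℝ)) := by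
      field_simp
      try exact Or.inl trivial
    rw [key, abs_div, abs_of_pos (show (0:ℝ) < ℓ * lam k * (nk k : ℝ) by positivity)]
    have hlb := hlam_lb k hk
    have step : |ℓ * (nk k : ℝ) - lam k| / (ℓ * lam k * (nk k : ℝ))
        ≤ (ℓ * ((c : ℝ) + 1)) / (ℓ * (ℓ / 2 * ((k : ℝ) + 1)) * ((k : ℝ) + 1)) := by
      apply div_le_div₀ (by positivity) (herr k hk) (by positivity)
      have : ℓ * (ℓ / 2 * ((k : ℝ) + 1)) ≤ ℓ * lam k :=
        mul_le_mul_of_nonneg_left hlb hl.le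
      exact mul_le_mul this hn hk1.le (by positivity)
    refine step.trans (le_of_eq ?_)
    rw [hD]
    field_simp
  have hsum2 : Summable (fun k : ℕ => D * (1 / ((k : ℝ) + 1) ^ 2)) := by
    have h0 : Summable (fun n : ℕ => 1 / (n : ℝ) ^ 2) :=
      Real.summable_one_div_nat_pow.mpr (by norm_num)
    have h1 : Summable (fun n : ℕ => 1 / ((n + 1 : ℕ) : ℝ) ^ 2) :=
      (summable_nat_add_iff 1).mpr h0
    have h2 : Summable (fun n : ℕ => 1 / ((n : ℝ) + 1) ^ 2) := by
      convert h1 using 2 with n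
      push_cast
      ring
    exact h2.mul_left D
  refine ⟨nk, hmono.injective, fun k => lt_of_lt_of_le k.succ_pos (hge k), ?_⟩
  rw [← summable_nat_add_iff K]
  apply Summable.of_nonneg_of_le (fun n => abs_nonneg _)
    (fun n => hbound (n + K) (Nat.le_add_left K n))
  exact (summable_nat_add_iff K).mpr hsum2
end

section
/- Let Λ = (λ_n)_{n≥1} be a strictly increasing sequence of positive reals with liminf_{n→∞} (λ_{n+1} − λ_n) = ℓ > 0, and let 0 < ε < ℓ. Define n_k = ⌊λ_k/(ℓ−ε)⌋. Then the n_k are eventually pairwise distinct positive integers and Σ_{k=1}^∞ |1/λ_k − (1/(ℓ−ε))/n_k| < +∞; consequently the Beurling–Malliavin density satisfies b(Λ) ≤ 1/ℓ. -/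
open Filter ENNReal

/-- The Beurling–Malliavin density of a sequence, following Redheffer: the infimum
of the `a ≥ 0` for which there exists a sequence of distinct positive integers
`(n_k)` with `∑ |1/λ_k − a/n_k| < ∞` (and `+∞` if no such `a` exists). -/
noncomputable def BMdensity (lam : ℕ → ℝ) : ℝ≥0∞ :=
  sInf {a : ℝ≥0∞ | a ≠ ⊤ ∧ ∃ nk : ℕ → ℕ, Function.Injective nk ∧ (∀ k, 0 < nk k) ∧
    Summable (fun k : ℕ => |1 / lam k - a.toReal / (nk k : ℝ)|)}

lemma BM_aux (lam : ℕ → ℝ) (ℓ ε : ℝ)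
    (hmono : StrictMono lam) (hpos : ∀ n, 0 < lam n)
    (hliminf : liminf (fun n : ℕ => lam (n + 1) - lam n) atTop = ℓ)
    (hl : 0 < ℓ) (hε : 0 < ε) (hεl : ε < ℓ) :
    (∃ N : ℕ, ∀ j k : ℕ, N ≤ j → N ≤ k → j ≠ k →
      ⌊lam j / (ℓ - ε)⌋₊ ≠ ⌊lam k / (ℓ - ε)⌋₊) ∧
    (∃ N : ℕ, ∀ k : ℕ, N ≤ k → 0 < ⌊lam k / (ℓ - ε)⌋₊) ∧
    Summable (fun k : ℕ => |1 / lam k - (1 / (ℓ - ε)) / ((⌊lam k / (ℓ - ε)⌋₊ : ℕ) : ℝ)|) ∧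
    ENNReal.ofReal (1 / (ℓ - ε)) ∈ {a : ℝ≥0∞ | a ≠ ⊤ ∧ ∃ nk : ℕ → ℕ,
      Function.Injective nk ∧ (∀ k, 0 < nk k) ∧
      Summable (fun k : ℕ => |1 / lam k - a.toReal / (nk k : ℝ)|)} := by
  set c : ℝ := ℓ - ε with hc_def
  have hc : 0 < c := by rw [hc_def]; linarith
  set f : ℕ → ℕ := fun k => ⌊lam k / c⌋₊ with hf_def
  -- eventually the gaps exceed c
  have hb : ∀ᶠ n in atTop, c < lam (n + 1) - lam n := by
    refine eventually_lt_of_lt_liminf ?_ ?_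
    · rw [hliminf]; linarith
    · exact isBoundedUnder_of ⟨0, fun n => le_of_lt (sub_pos.2 (hmono (Nat.lt_succ_self n)))⟩
  obtain ⟨N₀, hN₀⟩ := eventually_atTop.1 hb
  have hgap : ∀ n, N₀ ≤ n → lam n + c ≤ lam (n + 1) := by
    intro n hn; have := hN₀ n hn; linarith
  -- linear growth
  have hgrow : ∀ k, N₀ ≤ k → lam N₀ + ((k - N₀ : ℕ) : ℝ) * c ≤ lam k := by
    intro k hk
    induction k, hk using Nat.le_induction with
    | base => simp
    | succ n hn ih =>
      have h1 := hgap n hn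
      have h2 : ((n + 1 - N₀ : ℕ) : ℝ) = ((n - N₀ : ℕ) : ℝ) + 1 := by
        rw [Nat.succ_sub hn]; push_cast; ring
      rw [h2]; linarith
  have hlamlb : ∀ k, N₀ ≤ k → ((k - N₀ : ℕ) : ℝ) * c < lam k := by
    intro k hk
    have h1 := hgrow k hk
    have h2 := hpos N₀
    linarith
  have hfk : ∀ k, N₀ ≤ k → (k - N₀ : ℕ) ≤ f k := by
    intro k hk
    apply Nat.le_floor
    rw [le_div_iff₀ hc]
    exact (hlamlb k hk).le
  -- floors strictly increase past N₀
  have hstep : ∀ n, N₀ ≤ n → f n < f (n + 1) := by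
    intro n hn
    have h1 : lam n / c + 1 ≤ lam (n + 1) / c := by
      rw [div_add' _ _ _ hc.ne', div_le_div_iff₀ hc hc]
      have := hgap n hn; nlinarith
    have h2 : ⌊lam n / c + 1⌋₊ ≤ f (n + 1) := Nat.floor_le_floor h1
    rw [Nat.floor_add_one (div_nonneg (hpos n).le hc.le)] at h2
    have hfn : f n = ⌊lam n / c⌋₊ := rfl
    omega
  have hmonoF : ∀ j k, N₀ ≤ j → j < k → f j < f k := by
    intro j k hj hjk
    induction k, hjk using Nat.le_induction with
    | base => exact hstep j hj
    | succ n hn ih => exact ih.trans (hstep n (by omega))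
  -- key pointwise bound
  have hbound : ∀ (s k : ℕ), N₀ + 2 ≤ k →
      |1 / lam k - (1 / c) / ((f k + s : ℕ) : ℝ)| ≤
        ((s : ℝ) + 1) / c * (1 / (((k - (N₀ + 2) : ℕ) : ℝ) + 1) ^ 2) := by
    intro s k hk
    have hkN : N₀ ≤ k := by omega
    set m : ℕ := k - N₀ with hm_def
    have hm2 : 2 ≤ m := by omega
    have hmR : (2 : ℝ) ≤ (m : ℝ) := by exact_mod_cast hm2
    have hA : ((m : ℕ) : ℝ) * c < lam k := hlamlb k hkN
    have hApos : 0 < lam k := hpos k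
    have hsR : (0 : ℝ) ≤ (s : ℝ) := Nat.cast_nonneg s
    have hfm : (m : ℝ) ≤ (f k : ℝ) := by exact_mod_cast hfk k hkN
    have hfl : c * (f k : ℝ) ≤ lam k := by
      have h := Nat.floor_le (div_nonneg hApos.le hc.le) (a := lam k / c)
      rw [le_div_iff₀ hc] at h
      simp only [hf_def]
      linarith
    have hfu : lam k < c * ((f k : ℝ) + 1) := by
      have h := Nat.lt_floor_add_one (lam k / c)
      rw [div_lt_iff₀ hc] at h
      simp only [hf_def]
      linarith
    set B : ℝ := c * ((f k : ℝ) + s) with hB_def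
    have hBpos : 0 < B := by rw [hB_def]; nlinarith
    have heq : (1 / c) / ((f k + s : ℕ) : ℝ) = 1 / B := by
      rw [hB_def]; push_cast; rw [div_div]
    have hdiff : 1 / lam k - 1 / B = (B - lam k) / (lam k * B) := by
      field_simp
    have habs : |B - lam k| ≤ c * ((s : ℝ) + 1) := by
      rw [abs_le, hB_def]
      constructor <;> nlinarith
    have hAB : c ^ 2 * (m : ℝ) ^ 2 ≤ lam k * B := by
      rw [hB_def]
      have h2 : c * (m : ℝ) ≤ c * ((f k : ℝ) + s) := by nlinarith
      have h3 := mul_le_mul hA.le h2 (by positivity) hApos.le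
      nlinarith [h3]
    have hkm : ((k - (N₀ + 2) : ℕ) : ℝ) + 1 ≤ (m : ℝ) := by
      have h : (k - (N₀ + 2)) + 1 ≤ m := by omega
      exact_mod_cast h
    have hx : (0 : ℝ) < ((k - (N₀ + 2) : ℕ) : ℝ) + 1 := by positivity
    calc |1 / lam k - (1 / c) / ((f k + s : ℕ) : ℝ)|
        = |B - lam k| / (lam k * B) := by
          rw [heq, hdiff, abs_div, abs_of_pos (mul_pos hApos hBpos)]
      _ ≤ (c * ((s : ℝ) + 1)) / (c ^ 2 * (m : ℝ) ^ 2) :=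
          div_le_div₀ (by positivity) habs (by positivity) hAB
      _ = ((s : ℝ) + 1) / c * (1 / (m : ℝ) ^ 2) := by
          field_simp
      _ ≤ ((s : ℝ) + 1) / c * (1 / (((k - (N₀ + 2) : ℕ) : ℝ) + 1) ^ 2) := by
          have h1 : (1 : ℝ) / (m : ℝ) ^ 2 ≤ 1 / (((k - (N₀ + 2) : ℕ) : ℝ) + 1) ^ 2 := by
            apply one_div_le_one_div_of_le (by positivity)
            exact pow_le_pow_left₀ hx.le hkm 2
          exact mul_le_mul_of_nonneg_left h1 (by positivity)
  -- base summable series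
  have hbase : Summable (fun n : ℕ => 1 / ((n : ℝ) + 1) ^ 2) := by
    have h := (summable_nat_add_iff 1).2 (Real.summable_one_div_nat_pow.2 one_lt_two)
    exact h.congr fun n => by push_cast; ring
  -- summability for each shift s
  have hsummS : ∀ s : ℕ, Summable (fun k : ℕ => |1 / lam k - (1 / c) / ((f k + s : ℕ) : ℝ)|) := by
    intro s
    rw [← summable_nat_add_iff (N₀ + 2)]
    refine Summable.of_nonneg_of_le (fun n => abs_nonneg _) (fun n => ?_)
      (hbase.mul_left (((s : ℝ) + 1) / c))
    have h := hbound s (n + (N₀ + 2)) (Nat.le_add_left _ _)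
    simpa [Nat.add_sub_cancel] using h
  refine ⟨⟨N₀, fun j k hj hk hjk => ?_⟩, ⟨N₀ + 1, fun k hk => ?_⟩, ?_, ?_⟩
  · -- eventual injectivity
    rcases hjk.lt_or_gt with h | h
    · exact (hmonoF j k hj h).ne
    · exact (hmonoF k j hk h).ne'
  · -- eventual positivity
    have h := hfk k (by omega)
    simp only [hf_def] at h
    omega
  · -- summability
    have h := hsummS 0
    refine h.congr fun k => ?_
    norm_num
    rfl
  · -- membership
    have hf2 : ∀ k, N₀ + 2 ≤ k → 2 ≤ f k := by
      intro k hk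
      have := hfk k (by omega)
      omega
    refine ⟨ENNReal.ofReal_ne_top,
      fun k => if k < N₀ + 2 then k + 1 else f k + (N₀ + 2), ?_, ?_, ?_⟩
    · intro a b hab
      by_cases ha : a < N₀ + 2 <;> by_cases hb2 : b < N₀ + 2 <;>
        simp only [ha, hb2, if_pos, if_neg, if_true, if_false] at hab
      · omega
      · have := hf2 b (by omega); omega
      · have := hf2 a (by omega); omega
      · have h3 : f a = f b := by omega
        rcases lt_trichotomy a b with h | h | h
        · exact absurd h3 (hmonoF a b (by omega) h).ne
        · exact h
        · exact absurd h3.symm (hmonoF b a (by omega) h).ne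
    · intro k
      by_cases hk : k < N₀ + 2 <;> simp [hk]
    · rw [ENNReal.toReal_ofReal (by positivity)]
      rw [← summable_nat_add_iff (N₀ + 2)]
      have h := (summable_nat_add_iff (N₀ + 2)).2 (hsummS (N₀ + 2))
      refine h.congr fun n => ?_
      have hn : ¬ (n + (N₀ + 2) < N₀ + 2) := by omega
      simp only [hn, if_false]

/-- If `liminf (λ_{n+1} − λ_n) = ℓ > 0` and `0 < ε < ℓ`, then the integers
`n_k = ⌊λ_k/(ℓ−ε)⌋` are eventually pairwise distinct positive integers,
`∑ |1/λ_k − (1/(ℓ−ε))/n_k| < ∞`, and consequently `b(Λ) ≤ 1/ℓ`. -/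
theorem BM_density_le_of_liminf_gaps (lam : ℕ → ℝ) (ℓ ε : ℝ)
    (hmono : StrictMono lam) (hpos : ∀ n, 0 < lam n)
    (hliminf : liminf (fun n : ℕ => lam (n + 1) - lam n) atTop = ℓ)
    (hl : 0 < ℓ) (hε : 0 < ε) (hεl : ε < ℓ)
    (nk : ℕ → ℕ) (hnk : ∀ k : ℕ, nk k = ⌊lam k / (ℓ - ε)⌋₊) :
    (∃ N : ℕ, ∀ j k : ℕ, N ≤ j → N ≤ k → j ≠ k → nk j ≠ nk k) ∧
    (∃ N : ℕ, ∀ k : ℕ, N ≤ k → 0 < nk k) ∧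
    Summable (fun k : ℕ => |1 / lam k - (1 / (ℓ - ε)) / (nk k : ℝ)|) ∧
    BMdensity lam ≤ ENNReal.ofReal (1 / ℓ) := by
  obtain ⟨h1, h2, h3, _⟩ := BM_aux lam ℓ ε hmono hpos hliminf hl hε hεl
  refine ⟨?_, ?_, ?_, ?_⟩
  · obtain ⟨N, hN⟩ := h1
    exact ⟨N, fun j k hj hk hjk => by rw [hnk j, hnk k]; exact hN j k hj hk hjk⟩
  · obtain ⟨N, hN⟩ := h2
    exact ⟨N, fun k hk => by rw [hnk k]; exact hN k hk⟩
  · refine h3.congr fun k => ?_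
    rw [hnk k]
  · have hmem : ∀ δ : ℝ, 0 < δ → δ < ℓ →
        BMdensity lam ≤ ENNReal.ofReal (1 / (ℓ - δ)) := by
      intro δ hδ1 hδ2
      exact sInf_le (BM_aux lam ℓ δ hmono hpos hliminf hl hδ1 hδ2).2.2.2
    refine ENNReal.le_of_forall_pos_le_add fun η hη _ => ?_
    have hη' : (0 : ℝ) < η := hη
    set δ : ℝ := min (ℓ / 2) ((η : ℝ) * ℓ ^ 2 / 2) with hδ_def
    have hδpos : 0 < δ := lt_min (by linarith) (by positivity)
    have hδle : δ ≤ ℓ / 2 := min_le_left _ _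
    have hδle2 : δ ≤ (η : ℝ) * ℓ ^ 2 / 2 := min_le_right _ _
    have hδlt : δ < ℓ := by linarith
    have hkey : 1 / (ℓ - δ) ≤ 1 / ℓ + η := by
      have hld : (0 : ℝ) < ℓ - δ := by linarith
      have e1 : 1 / (ℓ - δ) - 1 / ℓ = δ / ((ℓ - δ) * ℓ) := by
        field_simp
        ring
      have e2 : δ / ((ℓ - δ) * ℓ) ≤ (η : ℝ) := by
        rw [div_le_iff₀ (by positivity)]
        nlinarith
      linarith
    calc BMdensity lam ≤ ENNReal.ofReal (1 / (ℓ - δ)) := hmem δ hδpos hδlt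
      _ ≤ ENNReal.ofReal (1 / ℓ + η) := ENNReal.ofReal_le_ofReal hkey
      _ = ENNReal.ofReal (1 / ℓ) + ENNReal.ofReal ((η : ℝ)) :=
          ENNReal.ofReal_add (by positivity) hη'.le
      _ = ENNReal.ofReal (1 / ℓ) + η := by rw [ENNReal.ofReal_coe_nnreal]
end

section
/- Let Λ = (λ_n) and M = (μ_n) be strictly increasing sequences of positive reals with Beurling–Malliavin densities b(Λ), b(M) ∈ (0, +∞). If ℓ > 0 satisfies Σ_k |1/λ_k − 1/(ℓ μ_k)| < +∞, then ℓ is the unique such positive number, and b(M) = ℓ · b(Λ). -/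
open Filter ENNReal

lemma BM_hsum_symm (lam mu : ℕ → ℝ) (ℓ : ℝ) (hl : 0 < ℓ)
    (hsum : Summable (fun k : ℕ => |1 / lam k - 1 / (ℓ * mu k)|)) :
    Summable (fun k : ℕ => |1 / mu k - 1 / ((1/ℓ) * lam k)|) := by
  refine (hsum.mul_left ℓ).congr fun k => ?_
  have h1 : ℓ * (1 / (ℓ * mu k)) = 1 / mu k := by
    rw [one_div, mul_inv, ← mul_assoc, mul_inv_cancel₀ hl.ne', one_mul, one_div]
  have h2 : 1 / ((1/ℓ) * lam k) = ℓ * (1 / lam k) := by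
    rw [one_div, one_div, mul_inv, inv_inv, one_div]
  calc ℓ * |1 / lam k - 1 / (ℓ * mu k)| = |ℓ * (1 / lam k - 1 / (ℓ * mu k))| := by
        rw [abs_mul, abs_of_pos hl]
    _ = |1 / mu k - 1 / ((1/ℓ) * lam k)| := by
        rw [mul_sub, h1, abs_sub_comm, h2]

lemma BM_step (lam mu : ℕ → ℝ) (ℓ : ℝ) (hl : 0 < ℓ)
    (hsum : Summable (fun k : ℕ => |1 / lam k - 1 / (ℓ * mu k)|))
    {a : ℝ≥0∞}
    (ha : a ∈ {a : ℝ≥0∞ | a ≠ ⊤ ∧ ∃ nk : ℕ → ℕ, Function.Injective nk ∧ (∀ k, 0 < nk k) ∧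
      Summable (fun k : ℕ => |1 / lam k - a.toReal / (nk k : ℝ)|)}) :
    ENNReal.ofReal ℓ * a ∈ {a : ℝ≥0∞ | a ≠ ⊤ ∧ ∃ nk : ℕ → ℕ, Function.Injective nk ∧
      (∀ k, 0 < nk k) ∧
      Summable (fun k : ℕ => |1 / mu k - a.toReal / (nk k : ℝ)|)} := by
  obtain ⟨haT, nk, hinj, hpos, hsa⟩ := ha
  refine ⟨ENNReal.mul_ne_top ENNReal.ofReal_ne_top haT, nk, hinj, hpos, ?_⟩
  have htr : (ENNReal.ofReal ℓ * a).toReal = ℓ * a.toReal := by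
    rw [ENNReal.toReal_mul, ENNReal.toReal_ofReal hl.le]
  have h1 : Summable (fun k : ℕ => |1 / (ℓ * mu k) - a.toReal / (nk k : ℝ)|) := by
    refine Summable.of_nonneg_of_le (fun k => abs_nonneg _) (fun k => ?_) (hsum.add hsa)
    calc |1 / (ℓ * mu k) - a.toReal / (nk k : ℝ)|
        ≤ |1 / (ℓ * mu k) - 1 / lam k| + |1 / lam k - a.toReal / (nk k : ℝ)| :=
          abs_sub_le _ _ _
      _ = |1 / lam k - 1 / (ℓ * mu k)| + |1 / lam k - a.toReal / (nk k : ℝ)| := by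
          rw [abs_sub_comm]
  refine (h1.mul_left ℓ).congr fun k => ?_
  have h2 : ℓ * (1 / (ℓ * mu k)) = 1 / mu k := by
    rw [one_div, mul_inv, ← mul_assoc, mul_inv_cancel₀ hl.ne', one_mul, one_div]
  rw [htr]
  calc ℓ * |1 / (ℓ * mu k) - a.toReal / (nk k : ℝ)|
      = |ℓ * (1 / (ℓ * mu k) - a.toReal / (nk k : ℝ))| := by rw [abs_mul, abs_of_pos hl]
    _ = |1 / mu k - ℓ * a.toReal / (nk k : ℝ)| := by rw [mul_sub, h2, mul_div_assoc]

lemma BM_ge (lam mu : ℕ → ℝ) (ℓ : ℝ) (hl : 0 < ℓ)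
    (hsum : Summable (fun k : ℕ => |1 / lam k - 1 / (ℓ * mu k)|)) :
    ENNReal.ofReal ℓ * BMdensity lam ≤ BMdensity mu := by
  have hsum' := BM_hsum_symm lam mu ℓ hl hsum
  unfold BMdensity
  refine le_sInf fun b hb => ?_
  have hb' := BM_step mu lam (1/ℓ) (by positivity) hsum' hb
  have h1 : sInf {a : ℝ≥0∞ | a ≠ ⊤ ∧ ∃ nk : ℕ → ℕ, Function.Injective nk ∧ (∀ k, 0 < nk k) ∧
      Summable (fun k : ℕ => |1 / lam k - a.toReal / (nk k : ℝ)|)} ≤ ENNReal.ofReal (1/ℓ) * b :=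
    sInf_le hb'
  calc ENNReal.ofReal ℓ * _ ≤ ENNReal.ofReal ℓ * (ENNReal.ofReal (1/ℓ) * b) :=
        mul_le_mul_right h1 _
    _ = b := by
        rw [← mul_assoc, ← ENNReal.ofReal_mul hl.le, mul_one_div_cancel hl.ne',
          ENNReal.ofReal_one, one_mul]

/-- If `b(Λ), b(M) ∈ (0,∞)` and `ℓ > 0` satisfies `∑ |1/λ_k − 1/(ℓ μ_k)| < ∞`,
then such an `ℓ` is unique and `b(M) = ℓ · b(Λ)`. -/
theorem BM_density_comparison (lam mu : ℕ → ℝ) (ℓ : ℝ)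
    (hmonoL : StrictMono lam) (hposL : ∀ n, 0 < lam n)
    (hmonoM : StrictMono mu) (hposM : ∀ n, 0 < mu n)
    (hbL : 0 < BMdensity lam) (hbL' : BMdensity lam < ⊤)
    (hbM : 0 < BMdensity mu) (hbM' : BMdensity mu < ⊤)
    (hl : 0 < ℓ)
    (hsum : Summable (fun k : ℕ => |1 / lam k - 1 / (ℓ * mu k)|)) :
    (∀ ℓ' : ℝ, 0 < ℓ' →
        Summable (fun k : ℕ => |1 / lam k - 1 / (ℓ' * mu k)|) → ℓ' = ℓ) ∧
    BMdensity mu = ENNReal.ofReal ℓ * BMdensity lam := by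
  constructor
  · intro ℓ' hl' hsum'
    by_contra hne
    have hdne : (1/ℓ : ℝ) - 1/ℓ' ≠ 0 := by
      intro h
      exact hne (by
        have : (1/ℓ : ℝ) = 1/ℓ' := by linarith
        field_simp at this
        linarith)
    have hd : 0 < |(1/ℓ : ℝ) - 1/ℓ'| := abs_pos.mpr hdne
    -- ∑ |1/(ℓμ) - 1/(ℓ'μ)| < ∞
    have hS : Summable (fun k : ℕ => |(1/ℓ : ℝ) - 1/ℓ'| * (1 / mu k)) := by
      refine Summable.of_nonneg_of_le (fun k => mul_nonneg (abs_nonneg _) (one_div_pos.mpr (hposM k)).le) (fun k => ?_) (hsum.add hsum')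
      have heq : |(1/ℓ : ℝ) - 1/ℓ'| * (1 / mu k) = |1 / (ℓ * mu k) - 1 / (ℓ' * mu k)| := by
        have : (1 : ℝ) / (ℓ * mu k) - 1 / (ℓ' * mu k) = ((1/ℓ : ℝ) - 1/ℓ') * (1 / mu k) := by
          rw [one_div, one_div, mul_inv, mul_inv]; ring
        rw [this, abs_mul, abs_of_pos (one_div_pos.mpr (hposM k))]
      rw [heq]
      calc |1 / (ℓ * mu k) - 1 / (ℓ' * mu k)|
          ≤ |1 / (ℓ * mu k) - 1 / lam k| + |1 / lam k - 1 / (ℓ' * mu k)| := abs_sub_le _ _ _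
        _ = |1 / lam k - 1 / (ℓ * mu k)| + |1 / lam k - 1 / (ℓ' * mu k)| := by
            rw [abs_sub_comm]
    have hmu_sum : Summable (fun k : ℕ => 1 / mu k) := by
      refine (hS.mul_left (|(1/ℓ : ℝ) - 1/ℓ'|)⁻¹).congr fun k => ?_
      rw [← mul_assoc, inv_mul_cancel₀ hd.ne', one_mul]
    have h0 : (0 : ℝ≥0∞) ∈ {a : ℝ≥0∞ | a ≠ ⊤ ∧ ∃ nk : ℕ → ℕ, Function.Injective nk ∧
        (∀ k, 0 < nk k) ∧
        Summable (fun k : ℕ => |1 / mu k - a.toReal / (nk k : ℝ)|)} := by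
      refine ⟨zero_ne_top, fun k => k + 1, fun a b h => by simpa using h, fun k => k.succ_pos, ?_⟩
      simp only [ENNReal.toReal_zero, zero_div, sub_zero]
      exact hmu_sum.congr fun k => (abs_of_pos (one_div_pos.mpr (hposM k))).symm
    have : BMdensity mu ≤ 0 := sInf_le h0
    exact absurd (le_antisymm this (zero_le)) hbM.ne'
  · have h1 := BM_ge lam mu ℓ hl hsum
    have h2 := BM_ge mu lam (1/ℓ) (by positivity) (BM_hsum_symm lam mu ℓ hl hsum)
    refine le_antisymm ?_ h1
    calc BMdensity mu = ENNReal.ofReal ℓ * (ENNReal.ofReal (1/ℓ) * BMdensity mu) := by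
          rw [← mul_assoc, ← ENNReal.ofReal_mul hl.le, mul_one_div_cancel hl.ne',
            ENNReal.ofReal_one, one_mul]
      _ ≤ ENNReal.ofReal ℓ * BMdensity lam := mul_le_mul_right h2 _
end

section
/- Let Λ = (λ_n)_{n≥1} be a strictly increasing sequence of positive reals with Beurling–Malliavin density b(Λ) < +∞. If there exists ℓ > 0 with Σ_k |1/λ_k − ℓ/k| < +∞, then ℓ = b(Λ). -/
open Filter ENNReal

/-- Sum of reciprocals over a finset of positive naturals of cardinality `N`
is at most the `N`-th harmonic number. -/
lemma sum_recip_finset_le : ∀ (N : ℕ) (T : Finset ℕ), T.card = N → (∀ m ∈ T, 1 ≤ m) →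
    ∑ m ∈ T, (1 : ℝ) / m ≤ ∑ k ∈ Finset.range N, 1 / ((k : ℝ) + 1) := by
  intro N
  induction N with
  | zero =>
    intro T hT _
    rw [Finset.card_eq_zero] at hT
    simp [hT]
  | succ N ih =>
    intro T hT hpos
    have hne : T.Nonempty := Finset.card_pos.mp (by omega)
    set M := T.max' hne with hM
    have hMmem : M ∈ T := T.max'_mem hne
    have hsub : T ⊆ Finset.Icc 1 M := by
      intro m hm
      exact Finset.mem_Icc.mpr ⟨hpos m hm, T.le_max' m hm⟩
    have hcard : N + 1 ≤ M := by
      have := Finset.card_le_card hsub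
      rw [Nat.card_Icc] at this
      omega
    have hM1 : (1 : ℝ) / M ≤ 1 / ((N : ℝ) + 1) := by
      apply one_div_le_one_div_of_le (by positivity)
      exact_mod_cast hcard
    have herase : (T.erase M).card = N := by
      rw [Finset.card_erase_of_mem hMmem, hT]; omega
    have hrec := ih (T.erase M) herase (fun m hm => hpos m (Finset.mem_of_mem_erase hm))
    calc ∑ m ∈ T, (1 : ℝ) / m
        = ∑ m ∈ T.erase M, (1 : ℝ) / m + 1 / M := (Finset.sum_erase_add T _ hMmem).symm
      _ ≤ ∑ k ∈ Finset.range N, 1 / ((k : ℝ) + 1) + 1 / ((N : ℝ) + 1) := by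
          exact add_le_add hrec hM1
      _ = ∑ k ∈ Finset.range (N + 1), 1 / ((k : ℝ) + 1) := by
          rw [Finset.sum_range_succ]

lemma sum_recip_inj_le (nk : ℕ → ℕ) (hinj : Function.Injective nk)
    (hpos : ∀ k, 0 < nk k) (N : ℕ) :
    ∑ k ∈ Finset.range N, (1 : ℝ) / (nk k) ≤ ∑ k ∈ Finset.range N, 1 / ((k : ℝ) + 1) := by
  have himg : ∑ m ∈ (Finset.range N).image nk, (1 : ℝ) / m
      = ∑ k ∈ Finset.range N, (1 : ℝ) / (nk k) :=
    Finset.sum_image (fun a _ b _ h => hinj h)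
  rw [← himg]
  apply sum_recip_finset_le N
  · rw [Finset.card_image_of_injective _ hinj, Finset.card_range]
  · intro m hm
    obtain ⟨k, _, rfl⟩ := Finset.mem_image.mp hm
    exact hpos k

/-- If `b(Λ) < ∞` and there is `ℓ > 0` with `∑ |1/λ_k − ℓ/k| < ∞`, then
`ℓ = b(Λ)`. (`lam k` denotes `λ_{k+1}`.) -/
theorem BM_density_eq_of_summable (lam : ℕ → ℝ) (ℓ : ℝ)
    (hmono : StrictMono lam) (hpos : ∀ n, 0 < lam n)
    (hb : BMdensity lam < ⊤) (hl : 0 < ℓ)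
    (hsum : Summable (fun k : ℕ => |1 / lam k - ℓ / ((k : ℝ) + 1)|)) :
    ENNReal.ofReal ℓ = BMdensity lam := by
  have hub : BMdensity lam ≤ ENNReal.ofReal ℓ := by
    apply sInf_le
    refine ⟨ENNReal.ofReal_ne_top, fun k => k + 1, add_left_injective 1,
      fun k => Nat.succ_pos k, ?_⟩
    have : (fun k : ℕ => |1 / lam k - (ENNReal.ofReal ℓ).toReal / ((k + 1 : ℕ) : ℝ)|)
        = fun k : ℕ => |1 / lam k - ℓ / ((k : ℝ) + 1)| := by
      funext k
      rw [ENNReal.toReal_ofReal hl.le]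
      push_cast
      ring_nf
    rw [this]
    exact hsum
  have hlb : ENNReal.ofReal ℓ ≤ BMdensity lam := by
    apply le_sInf
    rintro a ⟨ha_top, nk, hinj, hnkpos, hsum'⟩
    set t := a.toReal with ht
    have key : ℓ ≤ t := by
      by_contra hlt
      push_neg at hlt
      have hS : Summable (fun k : ℕ => |ℓ / ((k : ℝ) + 1) - t / (nk k : ℝ)|) := by
        apply Summable.of_nonneg_of_le (fun k => abs_nonneg _) (fun k => ?_) (hsum.add hsum')
        calc |ℓ / ((k : ℝ) + 1) - t / (nk k : ℝ)|
            ≤ |ℓ / ((k : ℝ) + 1) - 1 / lam k| + |1 / lam k - t / (nk k : ℝ)| :=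
              abs_sub_le _ _ _
          _ = |1 / lam k - ℓ / ((k : ℝ) + 1)| + |1 / lam k - t / (nk k : ℝ)| := by
              rw [abs_sub_comm]
      set C := ∑' k : ℕ, |ℓ / ((k : ℝ) + 1) - t / (nk k : ℝ)| with hC
      have hbound : ∀ N : ℕ, (ℓ - t) * ∑ k ∈ Finset.range N, 1 / ((k : ℝ) + 1) ≤ C := by
        intro N
        have h1 : ∑ k ∈ Finset.range N, (ℓ / ((k : ℝ) + 1) - t / (nk k : ℝ)) ≤ C := by
          refine le_trans (Finset.sum_le_sum fun k _ => le_abs_self _) ?_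
          exact Summable.sum_le_tsum (Finset.range N) (fun k _ => abs_nonneg _) hS
        have ht0 : (0 : ℝ) ≤ t := ENNReal.toReal_nonneg
        have h2 : ∑ k ∈ Finset.range N, t / (nk k : ℝ)
            ≤ t * ∑ k ∈ Finset.range N, 1 / ((k : ℝ) + 1) := by
          calc ∑ k ∈ Finset.range N, t / (nk k : ℝ)
              = t * ∑ k ∈ Finset.range N, (1 : ℝ) / (nk k : ℝ) := by
                rw [Finset.mul_sum]; congr 1; funext k; ring
            _ ≤ t * ∑ k ∈ Finset.range N, 1 / ((k : ℝ) + 1) :=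
                mul_le_mul_of_nonneg_left (sum_recip_inj_le nk hinj hnkpos N) ht0
        have h3 : ∑ k ∈ Finset.range N, ℓ / ((k : ℝ) + 1)
            = ℓ * ∑ k ∈ Finset.range N, 1 / ((k : ℝ) + 1) := by
          rw [Finset.mul_sum]; congr 1; funext k; ring
        have h4 : ∑ k ∈ Finset.range N, (ℓ / ((k : ℝ) + 1) - t / (nk k : ℝ))
            = ∑ k ∈ Finset.range N, ℓ / ((k : ℝ) + 1)
              - ∑ k ∈ Finset.range N, t / (nk k : ℝ) := Finset.sum_sub_distrib _ _
        nlinarith [h1, h2, h3, h4]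
      have htend : Tendsto (fun N : ℕ => (ℓ - t) * ∑ k ∈ Finset.range N, 1 / ((k : ℝ) + 1))
          atTop atTop := by
        apply Tendsto.const_mul_atTop (by linarith)
        exact Real.tendsto_sum_range_one_div_nat_succ_atTop
      obtain ⟨N, hN⟩ := (htend.eventually_gt_atTop C).exists
      exact absurd (hbound N) (not_le.mpr hN)
    calc ENNReal.ofReal ℓ ≤ ENNReal.ofReal t := ENNReal.ofReal_le_ofReal key
      _ = a := ENNReal.ofReal_toReal ha_top
  exact le_antisymm hlb hub
end
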